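/- arXiv:1907.13301 — 4 statements merged into one kernel-verified Lean document; each statement's English description precedes it below -/
import Mathlib

section
/- Let G be a stochastic diffusion model on a finite node set V with |V| = n ≥ 2 that satisfies the variance bound with constant c ≥ 1 for step limit τ. Fix an integer s ≥ 1 and reals 0 < ε < 1 and 0 < δ < 1. Construct the median-of-averages oracle m from r·ℓ i.i.d. simulations arranged in r pools of ℓ simulations each, with r ≥ 28·ln(n^s/δ) and ℓ ≥ 4·c·ε^{-2}. Then any set T with |T| ≤ s that maximizes m(S) over all S ⊆ V with |S| ≤ s satisfies Pr[ I^τ(T) ≥ (1 − 2ε)·OPT^τ_s ] ≥ 1 − δ. (In particular, 112·ε^{-2}·c·s·ln(n/δ) i.i.d. simulations suffice, up to integer rounding, to recover a (1−2ε)-approximate influence maximizer with confidence 1−δ.) -/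
open Finset

/-- A family of activation functions: for each node `v`, a monotone boolean
function of the current active set. -/
abbrev ActFam (V : Type*) := V → Finset V → Bool

section Core
variable {V : Type*} [Fintype V] [DecidableEq V]

/-- One diffusion step: all active nodes stay active, and an inactive node `v`
becomes active when `φ v` evaluates to `true` on the active set (minus `v`). -/
def dstep (φ : ActFam V) (A : Finset V) : Finset V :=
  A ∪ Finset.univ.filter (fun v => φ v (A.erase v) = true)

/-- `reach φ S t` : the set `ρ^t(φ,S)` of nodes active after `t` diffusion steps
from seed set `S`. -/
def reach (φ : ActFam V) (S : Finset V) : ℕ → Finset V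
  | 0 => S
  | t + 1 => dstep φ (reach φ S t)

/-- τ-step influence `I^τ(S)` of a seed set `S`, under the distribution `p` over
activation-function families and utility `H`. -/
noncomputable def infl (p : ActFam V → ℝ) (H : Finset V → ℝ) (τ : ℕ) (S : Finset V) : ℝ :=
  ∑ φ : ActFam V, p φ * H (reach φ S τ)

/-- Variance of the τ-step reachability value `R^τ(S) = H(ρ^τ(φ,S))`. -/
noncomputable def varReach (p : ActFam V → ℝ) (H : Finset V → ℝ) (τ : ℕ) (S : Finset V) : ℝ :=
  ∑ φ : ActFam V, p φ * (H (reach φ S τ) - infl p H τ S) ^ 2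

/-- Submodularity of a set function. -/
def SubmodularFn (F : Finset V → ℝ) : Prop :=
  ∀ A B : Finset V, A ⊆ B → ∀ x ∉ B, F (insert x B) - F B ≤ F (insert x A) - F A

/-- Monotone nondecreasing set function. -/
def MonotoneFn (F : Finset V → ℝ) : Prop :=
  ∀ A B : Finset V, A ⊆ B → F A ≤ F B

/-- A stochastic diffusion model: a probability distribution over families of
monotone activation functions. -/
structure SDM (V : Type*) [Fintype V] [DecidableEq V] where
  p : ActFam V → ℝ
  nonneg : ∀ φ, 0 ≤ p φ
  sum_one : ∑ φ : ActFam V, p φ = 1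
  mono : ∀ φ, p φ ≠ 0 → ∀ v, Monotone (φ v)

/-- The SDM given by weights `p` is independent: the activation functions of the
nodes are mutually independent, i.e. `p` is a product of per-node distributions. -/
def IndepP (p : ActFam V → ℝ) : Prop :=
  ∃ q : V → (Finset V → Bool) → ℝ,
    (∀ v g, 0 ≤ q v g) ∧ (∀ v, ∑ g : Finset V → Bool, q v g = 1) ∧
    (∀ φ, p φ = ∏ v, q v (φ v))

/-- Influence function of the reduced model with respect to `T`:  the expectation,
conditioned on no node outside `T` being directly activated by `T`, of the marginal
utility `H(ρ^τ(φ, S ∪ T)) - H(T)`.  (For an independent SDM this coincides with the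
influence of the reduced model on node set `V ∖ T` with utility `H'(S) = H(S∪T) - H(T)`.) -/
noncomputable def reducedInfl (p : ActFam V → ℝ) (H : Finset V → ℝ) (T : Finset V)
    (τ : ℕ) (S : Finset V) : ℝ :=
  (∑ φ : ActFam V,
      Set.indicator {ψ : ActFam V | ∀ v ∉ T, ψ v (T.erase v) = false} p φ *
        (H (reach φ (S ∪ T) τ) - H T)) /
  (∑ φ : ActFam V, Set.indicator {ψ : ActFam V | ∀ v ∉ T, ψ v (T.erase v) = false} p φ)

/-- Submodularity of a set function restricted to subsets of a ground set `U`. -/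
def SubmodularOn (U : Finset V) (F : Finset V → ℝ) : Prop :=
  ∀ A B : Finset V, A ⊆ B → B ⊆ U → ∀ x ∈ U, x ∉ B →
    F (insert x B) - F B ≤ F (insert x A) - F A

/-- Strong submodularity: the model is independent, the utility is submodular, and
the influence function of every reduced model (w.r.t. any `T` and any step limit)
is submodular on the reduced ground set `V ∖ T`. -/
def StronglySubmodular (p : ActFam V → ℝ) (H : Finset V → ℝ) : Prop :=
  IndepP p ∧ SubmodularFn H ∧
    ∀ (T : Finset V) (τ : ℕ), SubmodularOn Tᶜ (reducedInfl p H T τ)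

/-- `max_{v ∈ V} I^τ({v})`. -/
noncomputable def maxSingle (p : ActFam V → ℝ) (H : Finset V → ℝ) (τ : ℕ) : ℝ :=
  ⨆ v : V, infl p H τ {v}

/-- `OPT^τ_s`, the maximum influence of a seed set of size at most `s`. -/
noncomputable def OPTs (p : ActFam V → ℝ) (H : Finset V → ℝ) (τ : ℕ) (s : ℕ) : ℝ :=
  sSup {x : ℝ | ∃ S : Finset V, S.card ≤ s ∧ x = infl p H τ S}

/-- The variance bound with constant `c`. -/
def VarBoundC (p : ActFam V → ℝ) (H : Finset V → ℝ) (τ : ℕ) (c : ℝ) : Prop :=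
  ∀ T : Finset V,
    varReach p H τ T ≤ c * infl p H τ T * max (infl p H τ T) (maxSingle p H τ)

end Core

/-- Median of `r` reals: the `⌈r/2⌉`-th smallest value. -/
noncomputable def medianR {r : ℕ} (y : Fin r → ℝ) : ℝ :=
  ((List.ofFn y).mergeSort (fun a b => a ≤ b)).getD ((r + 1) / 2 - 1) 0

/-- Probability of the event `P` under (finitely supported) weights `w`. -/
noncomputable def prOf {α : Type*} [Fintype α] (w : α → ℝ) (P : Set α) : ℝ :=
  ∑ a : α, Set.indicator P w a



lemma sum_prod_pi {α : Type*} [Fintype α] (k : ℕ) (F : Fin k → α → ℝ) :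
    ∑ ω : Fin k → α, ∏ i, F i (ω i) = ∏ i, ∑ a, F i a := by
  induction k with
  | zero => simp
  | succ n ih =>
    rw [← (Fin.consEquiv (fun _ : Fin (n+1) => α)).sum_comp (fun ω => ∏ i, F i (ω i))]
    rw [Fintype.sum_prod_type]
    simp only [Fin.consEquiv_apply, Fin.prod_univ_succ, Fin.cons_zero, Fin.cons_succ]
    rw [← Finset.sum_mul_sum, ih (fun i a => F i.succ a)]

noncomputable def Ex {α : Type*} [Fintype α] (p : α → ℝ) (f : α → ℝ) : ℝ := ∑ a, p a * f a

noncomputable def Pk {α : Type*} [Fintype α] (p : α → ℝ) (k : ℕ) (ω : Fin k → α) : ℝ :=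
  ∏ i, p (ω i)

section Abstract
variable {α : Type*} [Fintype α] {p : α → ℝ}

lemma Pk_nonneg (hp0 : ∀ a, 0 ≤ p a) (k : ℕ) (ω : Fin k → α) : 0 ≤ Pk p k ω :=
  Finset.prod_nonneg (fun i _ => hp0 (ω i))

lemma sum_Pk_mul_prod (k : ℕ) (h : Fin k → α → ℝ) :
    ∑ ω : Fin k → α, Pk p k ω * ∏ i, h i (ω i) = ∏ i, Ex p (h i) := by
  have : ∀ ω : Fin k → α, Pk p k ω * ∏ i, h i (ω i) = ∏ i, p (ω i) * h i (ω i) := by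
    intro ω; rw [Pk, ← Finset.prod_mul_distrib]
  simp_rw [this]
  exact sum_prod_pi k (fun i a => p a * h i a)

lemma sum_Pk (hp1 : ∑ a, p a = 1) (k : ℕ) : ∑ ω : Fin k → α, Pk p k ω = 1 := by
  have := sum_Pk_mul_prod (p := p) k (fun _ _ => 1)
  simpa [Ex, hp1] using this

lemma Ex_one (hp1 : ∑ a, p a = 1) : Ex p (fun _ => 1) = 1 := by simp [Ex, hp1]

lemma sum_Pk_coord (hp1 : ∑ a, p a = 1) {k : ℕ} (j : Fin k) (f : α → ℝ) :
    ∑ ω : Fin k → α, Pk p k ω * f (ω j) = Ex p f := by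
  have h := sum_Pk_mul_prod (p := p) k (fun i a => if i = j then f a else 1)
  have h1 : ∀ ω : Fin k → α, (∏ i, if i = j then f (ω i) else 1) = f (ω j) := by
    intro ω
    rw [Finset.prod_eq_single_of_mem j (mem_univ j) (fun b _ hb => if_neg hb), if_pos rfl]
  have h2 : (∏ i, Ex p (fun a => if i = j then f a else 1)) = Ex p f := by
    rw [Finset.prod_eq_single_of_mem j (mem_univ j)]
    · simp
    · intro b _ hb; simp [hb, Ex_one hp1]
  simp_rw [h1] at h
  rw [h, h2]

lemma sum_Pk_pair (hp1 : ∑ a, p a = 1) {k : ℕ} {j j' : Fin k} (hjj : j ≠ j')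
    (g g' : α → ℝ) :
    ∑ ω : Fin k → α, Pk p k ω * (g (ω j) * g' (ω j')) = Ex p g * Ex p g' := by
  have h := sum_Pk_mul_prod (p := p) k
    (fun i a => if i = j then g a else if i = j' then g' a else 1)
  have h1 : ∀ ω : Fin k → α,
      (∏ i, if i = j then g (ω i) else if i = j' then g' (ω i) else 1)
        = g (ω j) * g' (ω j') := by
    intro ω
    rw [← Finset.prod_subset (Finset.subset_univ ({j, j'} : Finset (Fin k)))
      (fun x _ hx => by
        simp only [Finset.mem_insert, Finset.mem_singleton] at hx
        push_neg at hx
        simp [hx.1, hx.2])]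
    rw [Finset.prod_pair hjj]
    simp [hjj, Ne.symm hjj]
  have h2 : (∏ i, Ex p (fun a => if i = j then g a else if i = j' then g' a else 1))
      = Ex p g * Ex p g' := by
    rw [← Finset.prod_subset (Finset.subset_univ ({j, j'} : Finset (Fin k)))
      (fun x _ hx => by
        simp only [Finset.mem_insert, Finset.mem_singleton] at hx
        push_neg at hx
        simp only [if_neg hx.1, if_neg hx.2]
        exact Ex_one hp1)]
    rw [Finset.prod_pair hjj]
    congr 1
    · simp
    · simp [hjj, Ne.symm hjj]
  simp_rw [h1] at h
  rw [h, h2]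

lemma Ex_sub_const (hp1 : ∑ a, p a = 1) (f : α → ℝ) :
    Ex p (fun a => f a - Ex p f) = 0 := by
  simp only [Ex, mul_sub, Finset.sum_sub_distrib, ← Finset.sum_mul, hp1]
  ring

lemma var_mean (hp1 : ∑ a, p a = 1) (f : α → ℝ) (ℓ : ℕ) (hl : 1 ≤ ℓ) :
    ∑ b : Fin ℓ → α, Pk p ℓ b * ((1/(ℓ:ℝ)) * ∑ j, f (b j) - Ex p f) ^ 2
      = Ex p (fun a => (f a - Ex p f) ^ 2) / ℓ := by
  set μ := Ex p f with hμ
  set g : α → ℝ := fun a => f a - μ with hg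
  have hl0 : (ℓ:ℝ) ≠ 0 := by positivity
  have key : ∀ b : Fin ℓ → α,
      ((1/(ℓ:ℝ)) * ∑ j, f (b j) - μ) ^ 2
        = (1/(ℓ:ℝ))^2 * ∑ j, ∑ j', g (b j) * g (b j') := by
    intro b
    have : (1/(ℓ:ℝ)) * ∑ j, f (b j) - μ = (1/(ℓ:ℝ)) * ∑ j, g (b j) := by
      rw [hg]
      simp only [Finset.sum_sub_distrib, Finset.sum_const, card_univ, Fintype.card_fin,
        nsmul_eq_mul]
      field_simp
    rw [this, mul_pow]
    congr 1
    rw [sq, Finset.sum_mul_sum]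
  simp_rw [key]
  have hcomm : ∀ b : Fin ℓ → α,
      Pk p ℓ b * ((1/(ℓ:ℝ))^2 * ∑ j, ∑ j', g (b j) * g (b j'))
        = (1/(ℓ:ℝ))^2 * ∑ j, ∑ j', Pk p ℓ b * (g (b j) * g (b j')) := by
    intro b
    simp_rw [Finset.mul_sum]
    exact Finset.sum_congr rfl fun j _ => Finset.sum_congr rfl fun j' _ => by ring
  simp_rw [hcomm]
  rw [← Finset.mul_sum, Finset.sum_comm]
  have swap2 : ∑ j : Fin ℓ, ∑ b : Fin ℓ → α, ∑ j' : Fin ℓ, Pk p ℓ b * (g (b j) * g (b j'))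
      = ∑ j : Fin ℓ, ∑ j' : Fin ℓ, ∑ b : Fin ℓ → α, Pk p ℓ b * (g (b j) * g (b j')) :=
    Finset.sum_congr rfl fun j _ => Finset.sum_comm
  rw [swap2]
  have inner : ∀ j : Fin ℓ, (∑ j' : Fin ℓ, ∑ b : Fin ℓ → α, Pk p ℓ b * (g (b j) * g (b j')))
      = Ex p (fun a => (f a - μ) ^ 2) := by
    intro j
    rw [Finset.sum_eq_single_of_mem j (mem_univ j)]
    · have := sum_Pk_coord (p := p) hp1 j (fun a => g a * g a)
      rw [this]
      simp only [Ex, hg]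
      congr 1
      ext a
      ring
    · intro j' _ hne
      rw [sum_Pk_pair hp1 (Ne.symm hne) g g, Ex_sub_const hp1 f]
      ring
  simp_rw [inner]
  rw [Finset.sum_const]
  simp only [card_univ, Fintype.card_fin, nsmul_eq_mul]
  field_simp

lemma cheb (hp0 : ∀ a, 0 ≤ p a) (hp1 : ∑ a, p a = 1) (f : α → ℝ) (ℓ : ℕ) (hl : 1 ≤ ℓ)
    (a : ℝ) (ha : 0 < a) :
    ∑ b : Fin ℓ → α,
        Set.indicator {b : Fin ℓ → α | ¬ |(1/(ℓ:ℝ)) * ∑ j, f (b j) - Ex p f| ≤ a}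
          (Pk p ℓ) b
      ≤ Ex p (fun x => (f x - Ex p f) ^ 2) / ((ℓ:ℝ) * a ^ 2) := by
  have hpt : ∀ b : Fin ℓ → α,
      Set.indicator {b : Fin ℓ → α | ¬ |(1/(ℓ:ℝ)) * ∑ j, f (b j) - Ex p f| ≤ a}
          (Pk p ℓ) b
        ≤ Pk p ℓ b * (((1/(ℓ:ℝ)) * ∑ j, f (b j) - Ex p f) ^ 2 / a ^ 2) := by
    intro b
    by_cases hb : b ∈ {b : Fin ℓ → α | ¬ |(1/(ℓ:ℝ)) * ∑ j, f (b j) - Ex p f| ≤ a}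
    · rw [Set.indicator_of_mem hb]
      have hx : a < |(1/(ℓ:ℝ)) * ∑ j, f (b j) - Ex p f| := not_le.mp hb
      have h1 : a ^ 2 ≤ ((1/(ℓ:ℝ)) * ∑ j, f (b j) - Ex p f) ^ 2 := by
        have := sq_abs ((1/(ℓ:ℝ)) * ∑ j, f (b j) - Ex p f)
        nlinarith [abs_nonneg ((1/(ℓ:ℝ)) * ∑ j, f (b j) - Ex p f)]
      have h2 : (1:ℝ) ≤ ((1/(ℓ:ℝ)) * ∑ j, f (b j) - Ex p f) ^ 2 / a ^ 2 :=
        (one_le_div (by positivity)).mpr h1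
      nlinarith [Pk_nonneg hp0 ℓ b]
    · rw [Set.indicator_of_notMem hb]
      have := Pk_nonneg hp0 ℓ b
      positivity
  calc ∑ b : Fin ℓ → α, Set.indicator _ (Pk p ℓ) b
      ≤ ∑ b : Fin ℓ → α, Pk p ℓ b * (((1/(ℓ:ℝ)) * ∑ j, f (b j) - Ex p f) ^ 2 / a ^ 2) :=
        Finset.sum_le_sum (fun b _ => hpt b)
    _ = (∑ b : Fin ℓ → α, Pk p ℓ b * ((1/(ℓ:ℝ)) * ∑ j, f (b j) - Ex p f) ^ 2) / a ^ 2 := by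
        rw [Finset.sum_div]
        exact Finset.sum_congr rfl fun b _ => by ring
    _ = Ex p (fun x => (f x - Ex p f) ^ 2) / ℓ / a ^ 2 := by rw [var_mean hp1 f ℓ hl]
    _ = Ex p (fun x => (f x - Ex p f) ^ 2) / ((ℓ:ℝ) * a ^ 2) := by rw [div_div]

lemma chernoff {β : Type*} [Fintype β] (w : β → ℝ) (hw0 : ∀ b, 0 ≤ w b)
    (hw1 : ∑ b, w b = 1) (χ : β → ℝ) (hχ01 : ∀ b, χ b = 0 ∨ χ b = 1)
    (hq : Ex w χ ≤ 1/4) (r : ℕ) :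
    ∑ ω : Fin r → β, Set.indicator {ω : Fin r → β | (r:ℝ) ≤ 2 * ∑ i, χ (ω i)} (Pk w r) ω
      ≤ (5 / (4 * Real.sqrt 2)) ^ r := by
  have hs2 : (1:ℝ) ≤ Real.sqrt 2 := by
    rw [show (1:ℝ) = Real.sqrt 1 by simp]
    exact Real.sqrt_le_sqrt (by norm_num)
  have hs2sq : Real.sqrt 2 ^ 2 = 2 := Real.sq_sqrt (by norm_num)
  have hχnn : ∀ b, 0 ≤ χ b := fun b => by rcases hχ01 b with h | h <;> rw [h] <;> norm_num
  have hqnn : 0 ≤ Ex w χ :=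
    Finset.sum_nonneg fun b _ => mul_nonneg (hw0 b) (hχnn b)
  have hpt : ∀ ω : Fin r → β,
      Set.indicator {ω : Fin r → β | (r:ℝ) ≤ 2 * ∑ i, χ (ω i)} (Pk w r) ω
        ≤ Pk w r ω * (∏ i, (1 + χ (ω i))) / Real.sqrt 2 ^ r := by
    intro ω
    have hPknn := Pk_nonneg hw0 r ω
    have hprodnn : 0 ≤ ∏ i, (1 + χ (ω i)) :=
      Finset.prod_nonneg fun i _ => by linarith [hχnn (ω i)]
    by_cases hb : ω ∈ {ω : Fin r → β | (r:ℝ) ≤ 2 * ∑ i, χ (ω i)}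
    · rw [Set.indicator_of_mem hb]
      set S := Finset.univ.filter (fun i => χ (ω i) = 1) with hS
      have hsum : ∑ i, χ (ω i) = (S.card : ℝ) := by
        rw [hS, Finset.card_filter]
        push_cast
        exact Finset.sum_congr rfl fun i _ => by
          rcases hχ01 (ω i) with h | h <;> simp [h]
      have hprod : ∏ i, (1 + χ (ω i)) = 2 ^ S.card := by
        have : ∀ i : Fin r, 1 + χ (ω i) = if χ (ω i) = 1 then 2 else 1 := by
          intro i; rcases hχ01 (ω i) with h | h <;> simp [h] <;> norm_num
        simp_rw [this]
        rw [Finset.prod_ite, Finset.prod_const, Finset.prod_const, one_pow, mul_one]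
      have hrS : r ≤ 2 * S.card := by
        have := hb
        simp only [Set.mem_setOf_eq, hsum] at this
        exact_mod_cast this
      have hpow : Real.sqrt 2 ^ r ≤ ∏ i, (1 + χ (ω i)) := by
        rw [hprod]
        calc Real.sqrt 2 ^ r ≤ Real.sqrt 2 ^ (2 * S.card) :=
              pow_le_pow_right₀ hs2 hrS
          _ = (Real.sqrt 2 ^ 2) ^ S.card := by rw [pow_mul]
          _ = 2 ^ S.card := by rw [hs2sq]
      have h2r : (0:ℝ) < Real.sqrt 2 ^ r := by positivity
      rw [le_div_iff₀ h2r]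
      exact mul_le_mul_of_nonneg_left hpow hPknn
    · rw [Set.indicator_of_notMem hb]
      positivity
  calc ∑ ω : Fin r → β, Set.indicator _ (Pk w r) ω
      ≤ ∑ ω : Fin r → β, Pk w r ω * (∏ i, (1 + χ (ω i))) / Real.sqrt 2 ^ r :=
        Finset.sum_le_sum fun ω _ => hpt ω
    _ = (∑ ω : Fin r → β, Pk w r ω * ∏ i, (1 + χ (ω i))) / Real.sqrt 2 ^ r := by
        rw [Finset.sum_div]
    _ = (∏ i : Fin r, Ex w (fun b => 1 + χ b)) / Real.sqrt 2 ^ r := by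
        rw [sum_Pk_mul_prod r (fun _ b => 1 + χ b)]
    _ = (1 + Ex w χ) ^ r / Real.sqrt 2 ^ r := by
        congr 1
        rw [Finset.prod_const, Finset.card_univ, Fintype.card_fin]
        congr 1
        simp only [Ex, mul_add, Finset.sum_add_distrib, mul_one, hw1]
    _ ≤ (5/4 : ℝ) ^ r / Real.sqrt 2 ^ r := by
        apply div_le_div_of_nonneg_right ?_ (by positivity)
        exact pow_le_pow_left₀ (by linarith) (by linarith) r
    _ = (5 / (4 * Real.sqrt 2)) ^ r := by
        rw [← div_pow]
        congr 1
        rw [div_div]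

end Abstract


lemma countP_ofFn {r : ℕ} (y : Fin r → ℝ) (p : ℝ → Bool) :
    (List.ofFn y).countP p = (Finset.univ.filter (fun i => p (y i))).card := by
  rw [Finset.card_filter]
  induction r with
  | zero => simp
  | succ n ih =>
    rw [List.ofFn_succ, List.countP_cons, ih, Fin.sum_univ_succ]
    simp [add_comm]

lemma sorted_msort {r : ℕ} (y : Fin r → ℝ) :
    ((List.ofFn y).mergeSort (fun a b => a ≤ b)).Pairwise (· ≤ ·) := by
  have := List.pairwise_mergeSort (le := fun a b : ℝ => decide (a ≤ b))
    (fun a b c h₁ h₂ => by simpa using le_trans (by simpa using h₁) (by simpa using h₂))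
    (fun a b => by simpa using le_total a b) (List.ofFn y)
  exact this.imp (by simp)

lemma length_msort {r : ℕ} (y : Fin r → ℝ) :
    ((List.ofFn y).mergeSort (fun a b => a ≤ b)).length = r := by
  rw [(List.mergeSort_perm _ _).length_eq, List.length_ofFn]

lemma medianR_close {r : ℕ} (y : Fin r → ℝ) (μ a : ℝ)
    (hg : r < 2 * (Finset.univ.filter (fun i => |y i - μ| ≤ a)).card) :
    |medianR y - μ| ≤ a := by
  have hr1 : 1 ≤ r := by
    rcases Nat.eq_zero_or_pos r with h0 | h1
    · subst h0; simp at hg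
    · exact h1
  set L := (List.ofFn y).mergeSort (fun a b => a ≤ b) with hL
  have hlen : L.length = r := length_msort y
  have hsort := sorted_msort y
  set k0 := (r + 1) / 2 - 1 with hk0
  have hk0r : k0 < r := by omega
  have hmed : medianR y = L.get ⟨k0, by omega⟩ := by
    rw [medianR, ← hL, List.getD_eq_getElem _ _ (by omega)]
    rfl
  have hcnt : L.countP (fun x => decide (|x - μ| ≤ a)) =
      (Finset.univ.filter (fun i => |y i - μ| ≤ a)).card := by
    rw [(List.mergeSort_perm _ _).countP_eq, countP_ofFn]
    simp
  have hlow : ∃ j : Fin L.length, (j : ℕ) ≤ k0 ∧ |L.get j - μ| ≤ a := by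
    by_contra h
    push_neg at h
    have hle : L.countP (fun x => decide (|x - μ| ≤ a)) ≤ r - (k0 + 1) := by
      conv_lhs => rw [← List.take_append_drop (k0+1) L, List.countP_append]
      have h1 : (L.take (k0+1)).countP (fun x => decide (|x - μ| ≤ a)) = 0 := by
        rw [List.countP_eq_zero]
        intro x hx
        obtain ⟨j, hj, hjx⟩ := List.mem_iff_getElem.mp hx
        have hj' : j < k0 + 1 := by
          have := (List.length_take (i := k0+1) (l := L)) ▸ hj; omega
        have hjr : j < L.length := by omega
        have : (L.take (k0+1))[j] = L.get ⟨j, hjr⟩ := by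
          rw [List.getElem_take]; rfl
        rw [this] at hjx
        simp only [decide_eq_true_eq]
        rw [← hjx]
        exact not_le.mpr (h ⟨j, hjr⟩ (by simp; omega))
      rw [h1, zero_add]
      calc (L.drop (k0+1)).countP _ ≤ (L.drop (k0+1)).length := List.countP_le_length
        _ = r - (k0+1) := by rw [List.length_drop, hlen]
    omega
  have hhigh : ∃ j : Fin L.length, k0 ≤ (j : ℕ) ∧ |L.get j - μ| ≤ a := by
    by_contra h
    push_neg at h
    have hle : L.countP (fun x => decide (|x - μ| ≤ a)) ≤ k0 := by
      conv_lhs => rw [← List.take_append_drop k0 L, List.countP_append]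
      have h1 : (L.drop k0).countP (fun x => decide (|x - μ| ≤ a)) = 0 := by
        rw [List.countP_eq_zero]
        intro x hx
        obtain ⟨j, hj, hjx⟩ := List.mem_iff_getElem.mp hx
        have hjr : k0 + j < L.length := by
          have := (List.length_drop (i := k0) (l := L)) ▸ hj; omega
        have : (L.drop k0)[j] = L.get ⟨k0 + j, hjr⟩ := by
          rw [List.getElem_drop]; rfl
        rw [this] at hjx
        simp only [decide_eq_true_eq]
        rw [← hjx]
        exact not_le.mpr (h ⟨k0 + j, hjr⟩ (by simp))
      rw [h1, add_zero]
      calc (L.take k0).countP _ ≤ (L.take k0).length := List.countP_le_length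
        _ ≤ k0 := by rw [List.length_take]; omega
    omega
  obtain ⟨j, hj, hjg⟩ := hlow
  obtain ⟨j', hj', hjg'⟩ := hhigh
  have hle1 : L.get j ≤ L.get ⟨k0, by omega⟩ :=
    hsort.rel_get_of_le (by simpa [Fin.le_def] using hj)
  have hle2 : L.get ⟨k0, by omega⟩ ≤ L.get j' :=
    hsort.rel_get_of_le (by simpa [Fin.le_def] using hj')
  rw [hmed, abs_le]
  rw [abs_le] at hjg hjg'
  constructor <;> nlinarith [hjg.1, hjg.2, hjg'.1, hjg'.2]

lemma medianR_const {r : ℕ} (hr : 1 ≤ r) (y : Fin r → ℝ) (v : ℝ) (hy : ∀ i, y i = v) :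
    medianR y = v := by
  have h := medianR_close y v 0 (by simp [hy]; omega)
  have := abs_nonpos_iff.mp (le_of_le_of_eq h rfl)
  linarith [abs_nonneg (medianR y - v), this]


section MainAux
variable {V : Type*} [Fintype V] [DecidableEq V]

lemma infl_nonneg (G : SDM V) (H : Finset V → ℝ) (hHnn : ∀ S, 0 ≤ H S) (τ : ℕ)
    (S : Finset V) : 0 ≤ infl G.p H τ S :=
  Finset.sum_nonneg fun φ _ => mul_nonneg (G.nonneg φ) (hHnn _)

lemma card_small_sets [Nonempty V] (s : ℕ) :
    ((Finset.univ : Finset (Finset V)).filter (fun S => S.card ≤ s)).card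
      ≤ Fintype.card V ^ s + 1 := by
  classical
  have hsub : (Finset.univ : Finset (Finset V)).filter (fun S => S.card ≤ s) ⊆
      insert ∅ ((Finset.univ : Finset (Fin s → V)).image
        (fun f => Finset.univ.image f)) := by
    intro S hS
    simp only [Finset.mem_filter, Finset.mem_univ, true_and] at hS
    rcases eq_or_ne S ∅ with rfl | hne
    · exact Finset.mem_insert_self _ _
    · obtain ⟨x0, hx0⟩ := Finset.nonempty_iff_ne_empty.mpr hne
      refine Finset.mem_insert_of_mem (Finset.mem_image.mpr
        ⟨fun i => S.toList.getD i x0, Finset.mem_univ _, ?_⟩)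
      ext a
      simp only [Finset.mem_image, Finset.mem_univ, true_and]
      constructor
      · rintro ⟨i, rfl⟩
        by_cases hi : (i : ℕ) < S.toList.length
        · rw [List.getD_eq_getElem _ _ hi]
          exact Finset.mem_toList.mp (List.getElem_mem _)
        · rw [List.getD_eq_default _ _ (not_lt.mp hi)]
          exact hx0
      · intro ha
        obtain ⟨k, hk, hka⟩ := List.mem_iff_getElem.mp (Finset.mem_toList.mpr ha)
        have hlen : S.toList.length = S.card := Finset.length_toList S
        have hk' : k < s := by omega
        exact ⟨⟨k, hk'⟩, by rw [List.getD_eq_getElem _ _ (by simpa using hk)]; exact hka⟩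
  calc ((Finset.univ : Finset (Finset V)).filter (fun S => S.card ≤ s)).card
      ≤ _ := Finset.card_le_card hsub
    _ ≤ ((Finset.univ : Finset (Fin s → V)).image (fun f => Finset.univ.image f)).card + 1 :=
        Finset.card_insert_le _ _
    _ ≤ (Finset.univ : Finset (Fin s → V)).card + 1 := by
        have := Finset.card_image_le (s := (Finset.univ : Finset (Fin s → V)))
          (f := fun f => Finset.univ.image f)
        omega
    _ = Fintype.card V ^ s + 1 := by
        rw [Finset.card_univ]
        simp [Fintype.card_pi]

lemma det_step (G : SDM V) (H : Finset V → ℝ) (hHnn : ∀ S, 0 ≤ H S)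
    [Nonempty V] (τ s : ℕ) (hs : 1 ≤ s) (ε : ℝ) (hε0 : 0 < ε)
    (m : Finset V → ℝ) (T0 : Finset V) (hT0card : T0.card ≤ s)
    (hT0max : ∀ S : Finset V, S.card ≤ s → m S ≤ m T0)
    (hconc : ∀ S : Finset V, S.card ≤ s →
      |m S - infl G.p H τ S| ≤ ε * max (infl G.p H τ S) (maxSingle G.p H τ)) :
    (1 - 2*ε) * OPTs G.p H τ s ≤ infl G.p H τ T0 := by
  classical
  have hfin : {x : ℝ | ∃ S : Finset V, S.card ≤ s ∧ x = infl G.p H τ S}.Finite := by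
    have hss : {x : ℝ | ∃ S : Finset V, S.card ≤ s ∧ x = infl G.p H τ S}
        ⊆ (fun S => infl G.p H τ S) '' Set.univ := by
      rintro x ⟨S, _, rfl⟩; exact ⟨S, trivial, rfl⟩
    exact (Set.Finite.image _ Set.finite_univ).subset hss
  have hne : {x : ℝ | ∃ S : Finset V, S.card ≤ s ∧ x = infl G.p H τ S}.Nonempty :=
    ⟨infl G.p H τ ∅, ∅, by simp, rfl⟩
  obtain ⟨Sstar, hScard, hSopt⟩ := hne.csSup_mem hfin
  have hub : ∀ S : Finset V, S.card ≤ s → infl G.p H τ S ≤ OPTs G.p H τ s := fun S hS =>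
    le_csSup hfin.bddAbove ⟨S, hS, rfl⟩
  have hMOPT : maxSingle G.p H τ ≤ OPTs G.p H τ s :=
    ciSup_le fun v => hub {v} (by simpa using hs)
  have hOPT0 : 0 ≤ OPTs G.p H τ s :=
    le_trans (infl_nonneg G H hHnn τ ∅) (hub ∅ (by simp))
  have hIS : infl G.p H τ Sstar = OPTs G.p H τ s := hSopt.symm
  have h1 := hconc Sstar hScard
  have h2 := hconc T0 hT0card
  have h3 := hT0max Sstar hScard
  rw [hIS, max_eq_left hMOPT] at h1
  have hmS : (1-ε) * OPTs G.p H τ s ≤ m Sstar := by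
    have := abs_le.mp h1; linarith [this.1]
  have hIT0 : 0 ≤ infl G.p H τ T0 := infl_nonneg G H hHnn τ T0
  rcases le_total (maxSingle G.p H τ) (infl G.p H τ T0) with hcase | hcase
  · rw [max_eq_left hcase] at h2
    have h4 := abs_le.mp h2
    nlinarith [h4.1, h4.2, hOPT0, hmS, h3, mul_nonneg (mul_nonneg hε0.le hε0.le) hOPT0]
  · rw [max_eq_right hcase] at h2
    have h4 := abs_le.mp h2
    have hεM : ε * maxSingle G.p H τ ≤ ε * OPTs G.p H τ s :=
      mul_le_mul_of_nonneg_left hMOPT hε0.le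
    linarith [h4.1, h4.2, hmS, h3]

lemma pow_tail_bound (n s r : ℕ) (δ : ℝ) (hδ0 : 0 < δ) (hδ1 : δ < 1)
    (hn : 2 ≤ n) (hs : 1 ≤ s)
    (hr : (r : ℝ) ≥ 28 * Real.log ((n : ℝ) ^ s / δ)) :
    (5 / (4 * Real.sqrt 2)) ^ r ≤ δ / (2 * (n:ℝ) ^ s) := by
  have hn2 : (2:ℝ) ≤ (n:ℝ) := by exact_mod_cast hn
  have hns2 : (2:ℝ) ≤ (n:ℝ)^s := by
    calc (2:ℝ) = (2:ℝ)^1 := (pow_one _).symm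
      _ ≤ (2:ℝ)^s := pow_le_pow_right₀ (by norm_num) hs
      _ ≤ (n:ℝ)^s := pow_le_pow_left₀ (by norm_num) hn2 s
  have hns0 : (0:ℝ) < (n:ℝ)^s := by positivity
  have hB2 : (2:ℝ) ≤ (n:ℝ)^s / δ := by
    rw [le_div_iff₀ hδ0]; nlinarith
  have hL2 : Real.log 2 ≤ Real.log ((n:ℝ)^s / δ) := Real.log_le_log (by norm_num) hB2
  have hlog2 : 0 < Real.log 2 := Real.log_pos (by norm_num)
  set L := Real.log ((n:ℝ)^s / δ) with hLdef
  have hs2 : (0:ℝ) < Real.sqrt 2 := Real.sqrt_pos.mpr (by norm_num)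
  have hq0 : (0:ℝ) < 5 / (4 * Real.sqrt 2) := by positivity
  have hsqrt : (35:ℝ)/26 ≤ Real.sqrt 2 := by
    rw [show (35:ℝ)/26 = ((35:ℝ)/26) from rfl]
    exact (Real.le_sqrt (by norm_num) (by norm_num)).mpr (by norm_num)
  have hq14 : 5 / (4 * Real.sqrt 2) ≤ 13/14 := by
    rw [div_le_div_iff₀ (by positivity) (by norm_num)]
    nlinarith
  have hqe : 5 / (4 * Real.sqrt 2) ≤ Real.exp (-(1/14)) := by
    have := Real.add_one_le_exp (-(1/14 : ℝ))
    linarith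
  have hlogeq : Real.log (δ/(2*(n:ℝ)^s)) = -(L + Real.log 2) := by
    rw [hLdef, Real.log_div (ne_of_gt hδ0) (by positivity),
      Real.log_div (by positivity) (ne_of_gt hδ0), Real.log_mul (by norm_num) (ne_of_gt hns0)]
    ring
  calc (5 / (4 * Real.sqrt 2)) ^ r ≤ Real.exp (-(1/14)) ^ r :=
        pow_le_pow_left₀ hq0.le hqe r
    _ = Real.exp ((r:ℝ) * -(1/14)) := by rw [← Real.exp_nat_mul]
    _ ≤ Real.exp (Real.log (δ/(2*(n:ℝ)^s))) := by
        apply Real.exp_le_exp.mpr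
        rw [hlogeq]
        nlinarith
    _ = δ/(2*(n:ℝ)^s) := Real.exp_log (by positivity)

end MainAux

/-- **Sample complexity of influence maximization via the median-of-averages
oracle.**  For an SDM satisfying the variance bound with constant `c ≥ 1`, with
`r ≥ 28·ln(nˢ/δ)` pools of `ℓ ≥ 4·c·ε⁻²` i.i.d. simulations each, any maximizer
`T` (of size ≤ s) of the median-of-averages oracle satisfies
`I^τ(T) ≥ (1−2ε)·OPT^τ_s` with probability at least `1 − δ`. -/
theorem im_sample_complexity {V : Type*} [Fintype V] [DecidableEq V]
    (G : SDM V) (H : Finset V → ℝ)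
    (hH0 : H ∅ = 0) (hHnn : ∀ S, 0 ≤ H S) (hHmono : MonotoneFn H)
    (hn : 2 ≤ Fintype.card V)
    (τ : ℕ) (c : ℝ) (hc : 1 ≤ c) (hvar : VarBoundC G.p H τ c)
    (s : ℕ) (hs : 1 ≤ s)
    (ε δ : ℝ) (hε0 : 0 < ε) (hε1 : ε < 1) (hδ0 : 0 < δ) (hδ1 : δ < 1)
    (r ℓ : ℕ)
    (hr : (r : ℝ) ≥ 28 * Real.log ((Fintype.card V : ℝ) ^ s / δ))
    (hℓ : (ℓ : ℝ) ≥ 4 * c / ε ^ 2)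
    (T : (Fin r → Fin ℓ → ActFam V) → Finset V)
    (hTcard : ∀ ω, (T ω).card ≤ s)
    (hTmax : ∀ ω, ∀ S : Finset V, S.card ≤ s →
      medianR (fun i => (1 / (ℓ : ℝ)) * ∑ j, H (reach (ω i j) S τ)) ≤
        medianR (fun i => (1 / (ℓ : ℝ)) * ∑ j, H (reach (ω i j) (T ω) τ))) :
    prOf (fun ω : Fin r → Fin ℓ → ActFam V => ∏ i, ∏ j, G.p (ω i j))
      {ω | (1 - 2 * ε) * OPTs G.p H τ s ≤ infl G.p H τ (T ω)} ≥ 1 - δ := by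
  classical
  have hV : Nonempty V := Fintype.card_pos_iff.mp (by omega)
  have hp0 := G.nonneg
  have hp1 := G.sum_one
  set n := Fintype.card V with hn_def
  have hn2 : (2:ℝ) ≤ (n:ℝ) := by exact_mod_cast hn
  have hns2 : (2:ℝ) ≤ (n:ℝ)^s := by
    calc (2:ℝ) = (2:ℝ)^1 := (pow_one _).symm
      _ ≤ (2:ℝ)^s := pow_le_pow_right₀ (by norm_num) hs
      _ ≤ (n:ℝ)^s := pow_le_pow_left₀ (by norm_num) hn2 s
  have hB1 : (1:ℝ) < (n:ℝ)^s / δ := by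
    rw [lt_div_iff₀ hδ0]; nlinarith
  have hr0 : (0:ℝ) < r :=
    lt_of_lt_of_le (mul_pos (by norm_num) (Real.log_pos hB1)) hr
  have hr1 : 1 ≤ r := Nat.cast_pos.mp hr0
  have hε2 : (0:ℝ) < ε^2 := by positivity
  have hc0 : (0:ℝ) < c := lt_of_lt_of_le one_pos hc
  have hl0 : (0:ℝ) < ℓ := lt_of_lt_of_le (by positivity) hℓ
  have hl1 : 1 ≤ ℓ := Nat.cast_pos.mp hl0
  have hℓε : 4 * c ≤ (ℓ:ℝ) * ε^2 := by
    rw [ge_iff_le, div_le_iff₀ hε2] at hℓ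
    exact hℓ
  -- notation
  set w : (Fin r → Fin ℓ → ActFam V) → ℝ := fun ω => ∏ i, ∏ j, G.p (ω i j) with hw
  have hwPk : w = Pk (Pk G.p ℓ) r := rfl
  have hw0 : ∀ ω, 0 ≤ w ω := fun ω =>
    Finset.prod_nonneg fun i _ => Finset.prod_nonneg fun j _ => hp0 _
  have hw1 : ∑ ω : Fin r → Fin ℓ → ActFam V, w ω = 1 := by
    rw [hwPk]; exact sum_Pk (sum_Pk hp1 ℓ) r
  have hInn : ∀ S, 0 ≤ infl G.p H τ S := infl_nonneg G H hHnn τ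
  have hIMnn : ∀ S : Finset V, 0 ≤ max (infl G.p H τ S) (maxSingle G.p H τ) :=
    fun S => le_trans (hInn S) (le_max_left _ _)
  set m : Finset V → (Fin r → Fin ℓ → ActFam V) → ℝ :=
    fun S ω => medianR (fun i => (1 / (ℓ : ℝ)) * ∑ j, H (reach (ω i j) S τ)) with hm
  set Bad : Finset V → Set (Fin r → Fin ℓ → ActFam V) :=
    fun S => {ω | ¬ |m S ω - infl G.p H τ S| ≤
      ε * max (infl G.p H τ S) (maxSingle G.p H τ)} with hBad
  -- per-set tail bound
  have tail : ∀ S : Finset V, prOf w (Bad S) ≤ (5 / (4 * Real.sqrt 2)) ^ r := by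
    intro S
    set f : ActFam V → ℝ := fun φ => H (reach φ S τ) with hf
    set μ := infl G.p H τ S with hμ
    set IM := max (infl G.p H τ S) (maxSingle G.p H τ) with hIMd
    have hExf : Ex G.p f = μ := rfl
    have hvr : Ex G.p (fun x => (f x - Ex G.p f)^2) = varReach G.p H τ S := rfl
    rcases eq_or_lt_of_le (hIMnn S) with hdeg | hpos
    · -- degenerate case IM = 0
      have hμIM : μ ≤ IM := le_max_left _ _
      have hIS0 : μ = 0 := le_antisymm (le_trans hμIM hdeg.ge) (hInn S)
      have hVar0 : ∀ φ, G.p φ * (f φ - μ)^2 = 0 := by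
        have hle0 : varReach G.p H τ S ≤ 0 := by
          calc varReach G.p H τ S ≤ c * μ * IM := hvar S
            _ = 0 := by rw [hIS0]; ring
        have hge0 : (0:ℝ) ≤ varReach G.p H τ S :=
          Finset.sum_nonneg fun φ _ => mul_nonneg (hp0 φ) (sq_nonneg _)
        have hz : varReach G.p H τ S = 0 := le_antisymm hle0 hge0
        intro φ
        have := (Finset.sum_eq_zero_iff_of_nonneg
          (fun φ _ => mul_nonneg (hp0 φ) (sq_nonneg (H (reach φ S τ) - infl G.p H τ S)))).mp hz
        exact this φ (Finset.mem_univ φ)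
      have hzero : ∀ ω, Set.indicator (Bad S) w ω = 0 := by
        intro ω
        by_cases hωw : w ω = 0
        · by_cases hmem : ω ∈ Bad S
          · rw [Set.indicator_of_mem hmem, hωw]
          · rw [Set.indicator_of_notMem hmem]
        · have hcoord : ∀ i j, G.p (ω i j) ≠ 0 := by
            intro i j h0
            exact hωw (Finset.prod_eq_zero (Finset.mem_univ i)
              (Finset.prod_eq_zero (Finset.mem_univ j) h0))
          have hf0 : ∀ i j, f (ω i j) = 0 := by
            intro i j
            have h := hVar0 (ω i j)
            rcases mul_eq_zero.mp h with h' | h'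
            · exact absurd h' (hcoord i j)
            · have h2 : f (ω i j) - μ = 0 := pow_eq_zero_iff (n := 2) (by norm_num) |>.mp h'
              have h3 : f (ω i j) = μ := sub_eq_zero.mp h2
              exact h3.trans hIS0
          have hmed : m S ω = 0 := by
            rw [hm]
            apply medianR_const hr1
            intro i
            have hj : ∀ j : Fin ℓ, H (reach (ω i j) S τ) = 0 := fun j => hf0 i j
            simp [hj]
          have hnot : ω ∉ Bad S := by
            rw [hBad]
            simp only [Set.mem_setOf_eq, not_not]
            have hIS0' : infl G.p H τ S = 0 := hIS0
            rw [hmed, ← hdeg, hIS0']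
            simp
          rw [Set.indicator_of_notMem hnot]
      rw [prOf]
      rw [Finset.sum_congr rfl (fun ω _ => hzero ω), Finset.sum_const_zero]
      positivity
    · -- main case IM > 0
      set a := ε * IM with ha
      have ha0 : 0 < a := mul_pos hε0 hpos
      set χ : (Fin ℓ → ActFam V) → ℝ :=
        fun b => if |(1/(ℓ:ℝ)) * ∑ j, f (b j) - μ| ≤ a then 0 else 1 with hχ
      have hχapp : ∀ b, χ b = if |(1/(ℓ:ℝ)) * ∑ j, f (b j) - μ| ≤ a then 0 else 1 :=
        fun b => rfl
      have hχ01 : ∀ b, χ b = 0 ∨ χ b = 1 := by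
        intro b
        by_cases h : |(1/(ℓ:ℝ)) * ∑ j, f (b j) - μ| ≤ a
        · left; rw [hχapp b, if_pos h]
        · right; rw [hχapp b, if_neg h]
      have hq : Ex (Pk G.p ℓ) χ ≤ 1/4 := by
        have hEq : Ex (Pk G.p ℓ) χ
            = ∑ b : Fin ℓ → ActFam V,
                Set.indicator {b : Fin ℓ → ActFam V |
                    ¬ |(1/(ℓ:ℝ)) * ∑ j, f (b j) - Ex G.p f| ≤ a} (Pk G.p ℓ) b := by
          apply Finset.sum_congr rfl
          intro b _
          by_cases h : |(1/(ℓ:ℝ)) * ∑ j, f (b j) - μ| ≤ a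
          · rw [Set.indicator_of_notMem
              (by simp only [Set.mem_setOf_eq, not_not]; exact h)]
            rw [hχapp b, if_pos h, mul_zero]
          · rw [Set.indicator_of_mem (by simp only [Set.mem_setOf_eq]; exact h)]
            rw [hχapp b, if_neg h, mul_one]
        rw [hEq]
        have hcb := cheb (p := G.p) hp0 hp1 f ℓ hl1 a ha0
        apply le_trans hcb
        rw [hvr]
        have hv := hvar S
        have hd0 : (0:ℝ) < (ℓ:ℝ) * a^2 := by positivity
        calc varReach G.p H τ S / ((ℓ:ℝ) * a^2)
            ≤ (c * μ * IM) / ((ℓ:ℝ) * a^2) := by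
              gcongr

          _ ≤ 1/4 := by
              rw [div_le_iff₀ hd0, ha]
              have hIle : μ ≤ IM := le_max_left _ _
              nlinarith [hInn S, mul_nonneg (hInn S) hpos.le, sq_nonneg IM,
                mul_nonneg (mul_nonneg hc0.le (sub_nonneg.mpr hIle)) hpos.le,
                mul_nonneg (sub_nonneg.mpr hℓε) (sq_nonneg IM)]
      have hsub : Bad S ⊆ {ω : Fin r → Fin ℓ → ActFam V | (r:ℝ) ≤ 2 * ∑ i, χ (ω i)} := by
        intro ω hω
        simp only [Set.mem_setOf_eq]
        by_contra hcon
        push_neg at hcon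
        apply hω
        have hcount : ∑ i, χ (ω i) =
            ((Finset.univ.filter
              (fun i : Fin r => ¬ |(1/(ℓ:ℝ)) * ∑ j, f (ω i j) - μ| ≤ a)).card : ℝ) := by
          rw [Finset.card_filter]
          push_cast
          apply Finset.sum_congr rfl
          intro i _
          by_cases h : |(1/(ℓ:ℝ)) * ∑ j, f (ω i j) - μ| ≤ a
          · rw [hχapp (ω i), if_pos h, if_neg (not_not.mpr h)]
          · rw [hχapp (ω i), if_neg h, if_pos h]
        have hcard : 2 * (Finset.univ.filter
            (fun i : Fin r => ¬ |(1/(ℓ:ℝ)) * ∑ j, f (ω i j) - μ| ≤ a)).card < r := by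
          rw [hcount] at hcon
          exact_mod_cast hcon
        have hsplit := Finset.card_filter_add_card_filter_not
          (s := (Finset.univ : Finset (Fin r)))
          (p := fun i : Fin r => |(1/(ℓ:ℝ)) * ∑ j, f (ω i j) - μ| ≤ a)
        rw [Finset.card_univ, Fintype.card_fin] at hsplit
        have hgood : r < 2 * (Finset.univ.filter
            (fun i : Fin r => |(fun i : Fin r => (1/(ℓ:ℝ)) * ∑ j, f (ω i j)) i - μ| ≤ a)).card := by
          simp only []
          omega
        have hclose := medianR_close (fun i : Fin r => (1/(ℓ:ℝ)) * ∑ j, f (ω i j)) μ a hgood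
        exact hclose
      have hch := chernoff (Pk G.p ℓ) (Pk_nonneg hp0 ℓ) (sum_Pk hp1 ℓ) χ hχ01 hq r
      calc prOf w (Bad S)
          ≤ ∑ ω : Fin r → Fin ℓ → ActFam V,
              Set.indicator {ω : Fin r → Fin ℓ → ActFam V | (r:ℝ) ≤ 2 * ∑ i, χ (ω i)}
                (Pk (Pk G.p ℓ) r) ω := by
            apply Finset.sum_le_sum
            intro ω _
            rw [hwPk]
            exact Set.indicator_le_indicator_of_subset hsub
              (fun ω' => Pk_nonneg (Pk_nonneg hp0 ℓ) r ω') ω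
        _ ≤ (5 / (4 * Real.sqrt 2)) ^ r := hch
  -- union bound
  set 𝒮 : Finset (Finset V) := Finset.univ.filter (fun S => S.card ≤ s) with h𝒮
  set Conc : Set (Fin r → Fin ℓ → ActFam V) := {ω | ∀ S ∈ 𝒮, ω ∉ Bad S} with hConcd
  have hUnion : prOf w Concᶜ ≤ ∑ S ∈ 𝒮, prOf w (Bad S) := by
    have hpt : ∀ ω, Set.indicator Concᶜ w ω ≤ ∑ S ∈ 𝒮, Set.indicator (Bad S) w ω := by
      intro ω
      by_cases hω : ω ∈ Concᶜ
      · rw [Set.indicator_of_mem hω]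
        have hex : ∃ S ∈ 𝒮, ω ∈ Bad S := by
          rw [Set.mem_compl_iff, hConcd] at hω
          simp only [Set.mem_setOf_eq, not_forall] at hω
          obtain ⟨S, hS, hSbad⟩ := hω
          exact ⟨S, hS, not_not.mp hSbad⟩
        obtain ⟨S, hS𝒮, hSbad⟩ := hex
        calc w ω = Set.indicator (Bad S) w ω := (Set.indicator_of_mem hSbad w).symm
          _ ≤ ∑ S ∈ 𝒮, Set.indicator (Bad S) w ω :=
            Finset.single_le_sum
              (fun S' _ => Set.indicator_nonneg (fun x _ => hw0 x) ω) hS𝒮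
      · rw [Set.indicator_of_notMem hω]
        exact Finset.sum_nonneg fun S _ => Set.indicator_nonneg (fun x _ => hw0 x) ω
    calc prOf w Concᶜ ≤ ∑ ω : Fin r → Fin ℓ → ActFam V, ∑ S ∈ 𝒮, Set.indicator (Bad S) w ω :=
          Finset.sum_le_sum fun ω _ => hpt ω
      _ = ∑ S ∈ 𝒮, ∑ ω : Fin r → Fin ℓ → ActFam V, Set.indicator (Bad S) w ω :=
          Finset.sum_comm
      _ = ∑ S ∈ 𝒮, prOf w (Bad S) := rfl
  have hcard𝒮 : (𝒮.card : ℝ) ≤ (n:ℝ)^s + 1 := by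
    have := card_small_sets (V := V) s
    rw [h𝒮]
    exact_mod_cast this
  have hδb : ∑ S ∈ 𝒮, prOf w (Bad S) ≤ δ := by
    have hptb := pow_tail_bound n s r δ hδ0 hδ1 hn hs hr
    calc ∑ S ∈ 𝒮, prOf w (Bad S) ≤ ∑ _S ∈ 𝒮, (5/(4*Real.sqrt 2))^r :=
          Finset.sum_le_sum fun S _ => tail S
      _ = 𝒮.card * (5/(4*Real.sqrt 2))^r := by rw [Finset.sum_const, nsmul_eq_mul]
      _ ≤ (2*(n:ℝ)^s) * (δ/(2*(n:ℝ)^s)) := by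
          apply mul_le_mul (by linarith) hptb (by positivity) (by positivity)
      _ = δ := by field_simp
  have hsum1 : prOf w Conc + prOf w Concᶜ = 1 := by
    rw [prOf, prOf, ← Finset.sum_add_distrib]
    rw [← hw1]
    apply Finset.sum_congr rfl
    intro ω _
    have := congrFun (Set.indicator_self_add_compl Conc w) ω
    simpa using this
  have hConcLB : 1 - δ ≤ prOf w Conc := by
    have := le_trans hUnion hδb
    linarith
  rw [ge_iff_le]
  refine le_trans hConcLB ?_
  apply Finset.sum_le_sum
  intro ω _
  apply Set.indicator_le_indicator_of_subset ?_ hw0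
  intro ω' hω'
  simp only [Set.mem_setOf_eq]
  apply det_step G H hHnn τ s hs ε hε0 (fun S => m S ω') (T ω') (hTcard ω')
    (fun S hS => hTmax ω' S hS)
  intro S hS
  have hmem : S ∈ 𝒮 := by rw [h𝒮]; simp [hS]
  have := hω' S hmem
  rw [hBad] at this
  simpa using not_not.mp this
end

section
/- Fix an integer τ ≥ 1. Consider the complete rooted binary tree of depth τ with each edge live independently with probability 1/2, and let X be the number of nonempty binary strings v of length at most τ such that every edge on the path from the root to v is live (equivalently, the number of non-seed nodes activated within τ diffusion steps from the root). Then E[X] = τ and Var[X] ≥ (1/12)·τ·(E[X])², i.e. Var[X] ≥ τ³/12. Hence the linear dependence on τ in the variance upper bound for Independent Cascade models is necessary. -/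
open Finset

/-- The non-root nodes of the complete rooted binary tree of depth `τ`: a node at
depth `d + 1` (for `d : Fin τ`) is given by its `d + 1` branching bits.  Each such
node is identified with its unique incoming edge. -/
abbrev TreeNode (τ : ℕ) := Σ d : Fin τ, (Fin (d.1 + 1) → Bool)

/-- `isLivePath ω v` : every edge on the path from the root to `v` is live under the
edge-liveness assignment `ω`. -/
def isLivePath {τ : ℕ} (ω : TreeNode τ → Bool) (v : TreeNode τ) : Prop :=
  ∀ (k : Fin τ) (h : k.1 ≤ v.1.1),
    ω ⟨k, fun i => v.2 (Fin.castLE (Nat.succ_le_succ h) i)⟩ = true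

open Classical in
/-- The number of non-seed nodes activated within `τ` diffusion steps from the root,
i.e. the number of nonempty binary strings of length at most `τ` whose root-path
consists of live edges. -/
noncomputable def numActive (τ : ℕ) (ω : TreeNode τ → Bool) : ℝ :=
  ∑ v : TreeNode τ, if isLivePath ω v then 1 else 0

/-- Expectation under the uniform measure on edge-liveness assignments, i.e. each
edge is live independently with probability `1/2`. -/
noncomputable def treeExp (τ : ℕ) (f : (TreeNode τ → Bool) → ℝ) : ℝ :=
  (1 / (Fintype.card (TreeNode τ → Bool) : ℝ)) * ∑ ω : TreeNode τ → Bool, f ω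


section Aux

-- count_agree

lemma count_agree {A : Type*} [Fintype A] [DecidableEq A] (T : Finset A) (c : A → Bool) :
    ∑ ω : A → Bool, (if ∀ e ∈ T, ω e = c e then (1:ℝ) else 0)
      = 2 ^ (Fintype.card A - T.card) := by
  have h1 : ∀ ω : A → Bool, (if ∀ e ∈ T, ω e = c e then (1:ℝ) else 0)
      = ∏ e : A, (if e ∈ T then (if ω e = c e then (1:ℝ) else 0) else 1) := by
    intro ω
    rw [Finset.prod_ite_mem Finset.univ T (fun e => if ω e = c e then (1:ℝ) else 0),
      Finset.univ_inter, Finset.prod_boole]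
    split_ifs with h h' h' <;> first | rfl | exact absurd h h' | exact absurd h' h
  simp_rw [h1]
  rw [← Fintype.piFinset_univ, ← Finset.prod_univ_sum
    (fun _ => (Finset.univ : Finset Bool))
    (fun e b => if e ∈ T then (if b = c e then (1:ℝ) else 0) else 1)]
  have h2 : ∀ e : A, (∑ b : Bool, if e ∈ T then (if b = c e then (1:ℝ) else 0) else 1)
      = if e ∈ T then 1 else 2 := by
    intro e
    by_cases he : e ∈ T <;> simp [he] <;> cases c e <;> simp
  rw [Finset.prod_congr rfl (fun e _ => h2 e), Finset.prod_ite, Finset.prod_const,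
    Finset.prod_const, one_pow, one_mul]
  congr 1
  rw [Finset.filter_not, Finset.filter_mem_eq_inter, Finset.univ_inter,
    Finset.card_sdiff_of_subset (Finset.subset_univ T), Finset.card_univ]

section XX
open Classical

-- initial segment lemma
lemma initial_seg {S : Finset ℕ} {w : ℕ} (hS : S ⊆ Finset.range w)
    (hdc : ∀ k ∈ S, ∀ j ≤ k, j ∈ S) : S = Finset.range S.card := by
  have hsub : S ⊆ Finset.range S.card := by
    intro k hk
    rw [Finset.mem_range]
    have h1 : Finset.Iic k ⊆ S := fun j hj => hdc k hk j (Finset.mem_Iic.mp hj)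
    have := Finset.card_le_card h1
    rw [Nat.card_Iic] at this
    omega
  exact (Finset.eq_of_subset_of_card_le hsub (by rw [Finset.card_range]))

/-- prefix-agreement set -/
noncomputable def agreeSet {τ : ℕ} (u v : TreeNode τ) : Finset ℕ :=
  (Finset.range (min u.1.1 v.1.1 + 1)).filter (fun k =>
    ∀ (i : ℕ), i ≤ k → ∀ (hf : i < u.1.1 + 1) (hg : i < v.1.1 + 1),
      u.2 ⟨i, hf⟩ = v.2 ⟨i, hg⟩)

lemma mem_agreeSet {τ : ℕ} (u v : TreeNode τ) (k : ℕ) :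
    k ∈ agreeSet u v ↔ k < min u.1.1 v.1.1 + 1 ∧
      ∀ (i : ℕ), i ≤ k → ∀ (hf : i < u.1.1 + 1) (hg : i < v.1.1 + 1),
        u.2 ⟨i, hf⟩ = v.2 ⟨i, hg⟩ := by
  simp [agreeSet]

lemma agreeSet_dc {τ : ℕ} (u v : TreeNode τ) :
    ∀ k ∈ agreeSet u v, ∀ j ≤ k, j ∈ agreeSet u v := by
  intro k hk j hj
  rw [mem_agreeSet] at *
  exact ⟨lt_of_le_of_lt (Nat.lt_succ_iff.mp (lt_of_le_of_lt hj hk.1)) (Nat.lt_succ_self _),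
    fun i hi hf hg => hk.2 i (le_trans hi hj) hf hg⟩

lemma agreeSet_eq_range {τ : ℕ} (u v : TreeNode τ) :
    agreeSet u v = Finset.range (agreeSet u v).card :=
  initial_seg (Finset.filter_subset _ _) (agreeSet_dc u v)

lemma agreeSet_card_le {τ : ℕ} (u v : TreeNode τ) :
    (agreeSet u v).card ≤ min u.1.1 v.1.1 + 1 := by
  calc (agreeSet u v).card ≤ (Finset.range (min u.1.1 v.1.1 + 1)).card :=
        Finset.card_le_card (Finset.filter_subset _ _)
    _ = _ := Finset.card_range _

end XX

section YY
open Classical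

noncomputable def pathFinset {τ : ℕ} (v : TreeNode τ) : Finset (TreeNode τ) :=
  Finset.univ.filter (fun e =>
    e.1.1 ≤ v.1.1 ∧ ∀ (i : ℕ) (hi : i < e.1.1 + 1) (hi' : i < v.1.1 + 1),
      e.2 ⟨i, hi⟩ = v.2 ⟨i, hi'⟩)

lemma mem_pathFinset {τ : ℕ} (v e : TreeNode τ) :
    e ∈ pathFinset v ↔ e.1.1 ≤ v.1.1 ∧ ∀ (i : ℕ) (hi : i < e.1.1 + 1) (hi' : i < v.1.1 + 1),
      e.2 ⟨i, hi⟩ = v.2 ⟨i, hi'⟩ := by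
  simp [pathFinset]

lemma card_inter_pathFinset {τ : ℕ} (u v : TreeNode τ) :
    (pathFinset u ∩ pathFinset v).card = (agreeSet u v).card := by
  apply Finset.card_bij (fun e _ => e.1.1)
  · intro e he
    rw [Finset.mem_inter, mem_pathFinset, mem_pathFinset] at he
    obtain ⟨⟨hu1, hu2⟩, hv1, hv2⟩ := he
    rw [mem_agreeSet]
    refine ⟨by omega, fun i hi hf hg => ?_⟩
    rw [← hu2 i (by omega) hf, ← hv2 i (by omega) hg]
  · intro e he e' he' hee
    rw [Finset.mem_inter, mem_pathFinset, mem_pathFinset] at he he'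
    obtain ⟨⟨d, hd⟩, f⟩ := e
    obtain ⟨⟨d', hd'⟩, f'⟩ := e'
    simp only at hee
    subst hee
    refine Sigma.ext rfl (heq_of_eq ?_)
    funext i
    rw [he.1.2 i.1 i.2 (by omega), he'.1.2 i.1 i.2 (by omega)]
  · intro k hk
    rw [mem_agreeSet] at hk
    obtain ⟨hk1, hk2⟩ := hk
    have hku : k ≤ u.1.1 := by omega
    have hkτ : k < τ := lt_of_le_of_lt hku u.1.2
    refine ⟨⟨⟨k, hkτ⟩, fun i => u.2 (Fin.castLE (Nat.succ_le_succ hku) i)⟩, ?_, rfl⟩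
    rw [Finset.mem_inter, mem_pathFinset, mem_pathFinset]
    dsimp only
    refine ⟨⟨hku, fun i hi hi' => by congr 1⟩, by omega, fun i hi hi' => ?_⟩
    rw [show (Fin.castLE (Nat.succ_le_succ hku) ⟨i, hi⟩ : Fin (u.1.1+1)) = ⟨i, by omega⟩ from rfl]
    exact hk2 i (by omega) _ hi'


lemma pathEdge_mem {τ : ℕ} (v : TreeNode τ) (k : Fin τ) (h : k.1 ≤ v.1.1) :
    (⟨k, fun i => v.2 (Fin.castLE (Nat.succ_le_succ h) i)⟩ : TreeNode τ) ∈ pathFinset v := by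
  rw [mem_pathFinset]
  exact ⟨h, fun i hi hi' => by congr 1⟩

lemma isLivePath_iff {τ : ℕ} (ω : TreeNode τ → Bool) (v : TreeNode τ) :
    isLivePath ω v ↔ ∀ e ∈ pathFinset v, ω e = true := by
  constructor
  · intro H e he
    rw [mem_pathFinset] at he
    obtain ⟨h1, h2⟩ := he
    have := H e.1 h1
    convert this using 2
    refine Sigma.ext rfl (heq_of_eq ?_)
    funext i
    exact h2 i.1 i.2 (lt_of_lt_of_le i.2 (Nat.succ_le_succ h1))
  · intro H k h
    exact H _ (pathEdge_mem v k h)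

lemma card_pathFinset {τ : ℕ} (v : TreeNode τ) :
    (pathFinset v).card = v.1.1 + 1 := by
  have hinj : Function.Injective (fun k : Fin (v.1.1 + 1) =>
      (⟨⟨k.1, lt_of_le_of_lt (Nat.lt_succ_iff.mp k.2) v.1.2⟩,
        fun i => v.2 (Fin.castLE (Nat.succ_le_succ (Nat.lt_succ_iff.mp k.2)) i)⟩ : TreeNode τ)) := by
    intro k k' h
    have := congrArg (fun e : TreeNode τ => e.1.1) h
    exact Fin.ext this
  have : pathFinset v = Finset.univ.image (fun k : Fin (v.1.1 + 1) =>
      (⟨⟨k.1, lt_of_le_of_lt (Nat.lt_succ_iff.mp k.2) v.1.2⟩,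
        fun i => v.2 (Fin.castLE (Nat.succ_le_succ (Nat.lt_succ_iff.mp k.2)) i)⟩ : TreeNode τ)) := by
    apply Finset.ext
    intro e
    simp only [Finset.mem_image, Finset.mem_univ, true_and]
    constructor
    · intro he
      rw [mem_pathFinset] at he
      obtain ⟨h1, h2⟩ := he
      obtain ⟨⟨d, hd⟩, f⟩ := e
      refine ⟨⟨d, Nat.lt_succ_of_le h1⟩, ?_⟩
      refine Sigma.ext rfl (heq_of_eq ?_)
      funext i
      exact (h2 i.1 i.2 (lt_of_lt_of_le i.2 (Nat.succ_le_succ h1))).symm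
    · rintro ⟨k, rfl⟩
      exact pathEdge_mem v _ (Nat.lt_succ_iff.mp k.2)
  rw [this, Finset.card_image_of_injective _ hinj, Finset.card_univ, Fintype.card_fin]

end YY

section ZZ
open Classical

lemma pow_card_inter {τ : ℕ} (u v : TreeNode τ) :
    (2:ℝ) ^ ((pathFinset u ∩ pathFinset v).card)
      = 1 + ∑ k ∈ Finset.range (min u.1.1 v.1.1 + 1),
          (if k ∈ agreeSet u v then (2:ℝ)^k else 0) := by
  rw [card_inter_pathFinset]
  set c := (agreeSet u v).card with hc
  have hcw : c ≤ min u.1.1 v.1.1 + 1 := agreeSet_card_le u v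
  have h1 : ∑ k ∈ Finset.range (min u.1.1 v.1.1 + 1),
      (if k ∈ agreeSet u v then (2:ℝ)^k else 0)
      = ∑ k ∈ Finset.range c, (2:ℝ)^k := by
    rw [← Finset.sum_filter]
    congr 1
    ext k
    simp only [Finset.mem_filter, Finset.mem_range]
    rw [agreeSet_eq_range, Finset.mem_range, ← hc]
    omega
  rw [h1, geom_sum_eq (by norm_num : (2:ℝ) ≠ 1)]
  ring

lemma count_pairs {τ a b : ℕ} (ha : a < τ) (hb : b < τ) (k : ℕ) (hk : k ≤ min a b) :
    ∑ f : Fin (a+1) → Bool, ∑ g : Fin (b+1) → Bool,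
      (if k ∈ agreeSet (⟨⟨a,ha⟩,f⟩ : TreeNode τ) ⟨⟨b,hb⟩,g⟩ then (1:ℝ) else 0)
      = 2^(a+1) * 2^(b-k) := by
  have hka : k ≤ a := le_trans hk (min_le_left _ _)
  have hkb : k ≤ b := le_trans hk (min_le_right _ _)
  have hinner : ∀ f : Fin (a+1) → Bool,
      ∑ g : Fin (b+1) → Bool,
        (if k ∈ agreeSet (⟨⟨a,ha⟩,f⟩ : TreeNode τ) ⟨⟨b,hb⟩,g⟩ then (1:ℝ) else 0)
      = 2^(b-k) := by
    intro f
    set T : Finset (Fin (b+1)) := Finset.univ.filter (fun i => i.1 ≤ k) with hT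
    set cf : Fin (b+1) → Bool := fun i => if h : i.1 < a+1 then f ⟨i.1, h⟩ else true with hcf
    have hiff : ∀ g : Fin (b+1) → Bool,
        (k ∈ agreeSet (⟨⟨a,ha⟩,f⟩ : TreeNode τ) ⟨⟨b,hb⟩,g⟩) ↔ (∀ e ∈ T, g e = cf e) := by
      intro g
      rw [mem_agreeSet]
      constructor
      · rintro ⟨-, h2⟩ e he
        rw [hT, Finset.mem_filter] at he
        have hea : e.1 < a + 1 := by omega
        have := h2 e.1 he.2 hea e.2
        rw [hcf]
        simp only [hea, dif_pos]
        exact this.symm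
      · intro h
        refine ⟨by simp; omega, fun i hi hf hg => ?_⟩
        have hiT : (⟨i, hg⟩ : Fin (b+1)) ∈ T := by rw [hT, Finset.mem_filter]; exact ⟨Finset.mem_univ _, hi⟩
        have := h _ hiT
        rw [hcf] at this
        simp only [dif_pos hf] at this
        exact this.symm
    have hcount := count_agree T cf
    have hcard : T.card = k + 1 := by
      have : T = Finset.Iic (⟨k, by omega⟩ : Fin (b+1)) := by
        ext i; simp [hT, Fin.le_def]
      rw [this, Fin.card_Iic]
    have hAcard : Fintype.card (Fin (b+1)) = b + 1 := Fintype.card_fin _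
    rw [hAcard, hcard] at hcount
    have : b + 1 - (k + 1) = b - k := by omega
    rw [this] at hcount
    rw [← hcount]
    apply Finset.sum_congr rfl
    intro g _
    by_cases h : k ∈ agreeSet (⟨⟨a,ha⟩,f⟩ : TreeNode τ) ⟨⟨b,hb⟩,g⟩
    · rw [if_pos h, if_pos ((hiff g).mp h)]
    · rw [if_neg h, if_neg (fun hc => h ((hiff g).mpr hc))]
  rw [Finset.sum_congr rfl (fun f _ => hinner f), Finset.sum_const, Finset.card_univ]
  rw [Fintype.card_fun]
  simp [Fintype.card_fin, Fintype.card_bool]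

end ZZ

section WW
open Classical

lemma blockSum {τ a b : ℕ} (ha : a < τ) (hb : b < τ) :
    ∑ f : Fin (a+1) → Bool, ∑ g : Fin (b+1) → Bool,
      (2:ℝ) ^ ((pathFinset (⟨⟨a,ha⟩,f⟩ : TreeNode τ) ∩ pathFinset ⟨⟨b,hb⟩,g⟩).card)
    = 2^(a+b+2) + (min a b + 1 : ℝ) * 2^(a+b+1) := by
  have hrw : ∀ (f : Fin (a+1) → Bool) (g : Fin (b+1) → Bool),
      (2:ℝ) ^ ((pathFinset (⟨⟨a,ha⟩,f⟩ : TreeNode τ) ∩ pathFinset ⟨⟨b,hb⟩,g⟩).card)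
      = 1 + ∑ k ∈ Finset.range (min a b + 1),
          (2:ℝ)^k * (if k ∈ agreeSet (⟨⟨a,ha⟩,f⟩ : TreeNode τ) ⟨⟨b,hb⟩,g⟩ then (1:ℝ) else 0) := by
    intro f g
    rw [pow_card_inter]
    congr 1
    apply Finset.sum_congr rfl
    intro k _
    by_cases h : k ∈ agreeSet (⟨⟨a,ha⟩,f⟩ : TreeNode τ) ⟨⟨b,hb⟩,g⟩
    · rw [if_pos h, if_pos h, mul_one]
    · rw [if_neg h, if_neg h, mul_zero]
  have key : ∀ k ∈ Finset.range (min a b + 1), (2:ℝ)^k * (∑ f : Fin (a+1) → Bool,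
      ∑ g : Fin (b+1) → Bool,
      (if k ∈ agreeSet (⟨⟨a,ha⟩,f⟩ : TreeNode τ) ⟨⟨b,hb⟩,g⟩ then (1:ℝ) else 0)) = 2^(a+b+1) := by
    intro k hk
    rw [Finset.mem_range] at hk
    rw [count_pairs ha hb k (by omega), ← pow_add, ← pow_add]
    congr 1
    omega
  simp_rw [hrw, Finset.sum_add_distrib]
  have swap1 : ∀ f : Fin (a+1) → Bool,
      (∑ g : Fin (b+1) → Bool, ∑ k ∈ Finset.range (min a b + 1),
        (2:ℝ)^k * (if k ∈ agreeSet (⟨⟨a,ha⟩,f⟩ : TreeNode τ) ⟨⟨b,hb⟩,g⟩ then (1:ℝ) else 0))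
      = ∑ k ∈ Finset.range (min a b + 1), (2:ℝ)^k *
          ∑ g : Fin (b+1) → Bool,
            (if k ∈ agreeSet (⟨⟨a,ha⟩,f⟩ : TreeNode τ) ⟨⟨b,hb⟩,g⟩ then (1:ℝ) else 0) := by
    intro f
    rw [Finset.sum_comm]
    exact Finset.sum_congr rfl fun k _ => (Finset.mul_sum _ _ _).symm
  have hone : (∑ _f : Fin (a+1) → Bool, ∑ _g : Fin (b+1) → Bool, (1:ℝ)) = 2^(a+b+2) := by
    simp [Finset.sum_const, Finset.card_univ, Fintype.card_fun]
    rw [← pow_add]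
    congr 1
    omega
  rw [hone]
  simp_rw [swap1]
  rw [Finset.sum_comm]
  have swap2 : (∑ k ∈ Finset.range (min a b + 1), ∑ f : Fin (a+1) → Bool, (2:ℝ)^k *
          ∑ g : Fin (b+1) → Bool,
            (if k ∈ agreeSet (⟨⟨a,ha⟩,f⟩ : TreeNode τ) ⟨⟨b,hb⟩,g⟩ then (1:ℝ) else 0))
      = ∑ k ∈ Finset.range (min a b + 1), (2:ℝ)^(a+b+1) := by
    refine Finset.sum_congr rfl fun k hk => ?_
    rw [← Finset.mul_sum]
    exact key k hk
  rw [swap2, Finset.sum_const, Finset.card_range, nsmul_eq_mul]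
  push_cast
  ring

end WW

end Aux


section Aux2
open Classical

lemma treeExp_sum {τ : ℕ} {ι : Type*} (s : Finset ι) (F : ι → (TreeNode τ → Bool) → ℝ) :
    treeExp τ (fun ω => ∑ v ∈ s, F v ω) = ∑ v ∈ s, treeExp τ (F v) := by
  unfold treeExp
  rw [Finset.sum_comm, Finset.mul_sum]

lemma card_fun_tree (τ : ℕ) :
    (Fintype.card (TreeNode τ → Bool) : ℝ) = 2 ^ (Fintype.card (TreeNode τ)) := by
  rw [Fintype.card_fun, Fintype.card_bool]
  push_cast
  rfl

lemma treeExp_ind {τ : ℕ} (P : (TreeNode τ → Bool) → Prop) (T : Finset (TreeNode τ))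
    (hP : ∀ ω, P ω ↔ ∀ e ∈ T, ω e = true) :
    treeExp τ (fun ω => if P ω then (1:ℝ) else 0) = (1/2) ^ T.card := by
  unfold treeExp
  have h1 : (∑ ω : TreeNode τ → Bool, if P ω then (1:ℝ) else 0)
      = ∑ ω : TreeNode τ → Bool, if ∀ e ∈ T, ω e = (fun _ => true) e then (1:ℝ) else 0 := by
    refine Finset.sum_congr rfl fun ω _ => ?_
    by_cases h : P ω
    · rw [if_pos h, if_pos (fun e he => (hP ω).mp h e he)]
    · rw [if_neg h, if_neg fun hc => h ((hP ω).mpr fun e he => hc e he)]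
  rw [h1, count_agree T (fun _ => true), card_fun_tree]
  have hTM : T.card ≤ Fintype.card (TreeNode τ) := Finset.card_le_univ T
  rw [pow_sub₀ (2:ℝ) (by norm_num) hTM, div_pow, one_pow]
  have h2 : (2:ℝ) ^ (Fintype.card (TreeNode τ)) ≠ 0 := by positivity
  field_simp

lemma exp_single {τ : ℕ} (v : TreeNode τ) :
    treeExp τ (fun ω => if isLivePath ω v then (1:ℝ) else 0) = (1/2) ^ (v.1.1 + 1) := by
  refine Eq.trans (treeExp_ind _ (pathFinset v) (fun ω => isLivePath_iff ω v)) ?_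
  rw [card_pathFinset]

set_option maxHeartbeats 1000000 in
lemma exp_joint {τ : ℕ} (u v : TreeNode τ) :
    treeExp τ (fun ω => (if isLivePath ω u then (1:ℝ) else 0) *
        (if isLivePath ω v then (1:ℝ) else 0))
      = (2:ℝ) ^ ((pathFinset u ∩ pathFinset v).card) * (1/2) ^ (u.1.1 + v.1.1 + 2) := by
  have hpt : ∀ ω : TreeNode τ → Bool,
      (if isLivePath ω u then (1:ℝ) else 0) * (if isLivePath ω v then (1:ℝ) else 0)
      = @ite ℝ (∀ e ∈ pathFinset u ∪ pathFinset v, ω e = true)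
          (Classical.propDecidable _) (1:ℝ) 0 := by
    intro ω
    by_cases hu : isLivePath ω u <;> by_cases hv : isLivePath ω v
    · rw [if_pos hu, if_pos hv, if_pos, mul_one]
      intro e he
      rcases Finset.mem_union.mp he with h | h
      · exact (isLivePath_iff ω u).mp hu e h
      · exact (isLivePath_iff ω v).mp hv e h
    · rw [if_neg hv, mul_zero, if_neg]
      intro hc
      exact hv ((isLivePath_iff ω v).mpr fun e he => hc e (Finset.mem_union_right _ he))
    · rw [if_neg hu, zero_mul, if_neg]
      intro hc
      exact hu ((isLivePath_iff ω u).mpr fun e he => hc e (Finset.mem_union_left _ he))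
    · rw [if_neg hv, mul_zero, if_neg]
      intro hc
      exact hv ((isLivePath_iff ω v).mpr fun e he => hc e (Finset.mem_union_right _ he))
  have h1 : treeExp τ (fun ω => (if isLivePath ω u then (1:ℝ) else 0) *
        (if isLivePath ω v then (1:ℝ) else 0))
      = treeExp τ (fun ω => @ite ℝ (∀ e ∈ pathFinset u ∪ pathFinset v, ω e = true)
          (Classical.propDecidable _) (1:ℝ) 0) := by
    unfold treeExp
    exact congrArg _ (Finset.sum_congr rfl fun ω _ => hpt ω)
  rw [h1]
  refine Eq.trans (treeExp_ind _ (pathFinset u ∪ pathFinset v) (fun ω => Iff.rfl)) ?_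
  have hcards := Finset.card_union_add_card_inter (pathFinset u) (pathFinset v)
  rw [card_pathFinset, card_pathFinset] at hcards
  have h2 : (1/2:ℝ) ^ (u.1.1 + v.1.1 + 2)
      = (1/2) ^ ((pathFinset u ∪ pathFinset v).card) *
        (1/2) ^ ((pathFinset u ∩ pathFinset v).card) := by
    rw [← pow_add, hcards]
    congr 1
    omega
  have h3 : (2:ℝ) ^ ((pathFinset u ∩ pathFinset v).card) *
      (1/2) ^ ((pathFinset u ∩ pathFinset v).card) = 1 := by
    rw [← mul_pow]; norm_num
  rw [h2]
  linear_combination (-(1/2:ℝ) ^ ((pathFinset u ∪ pathFinset v).card)) * h3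

lemma treeExp_const (τ : ℕ) (c : ℝ) : treeExp τ (fun _ => c) = c := by
  unfold treeExp
  rw [Finset.sum_const, Finset.card_univ, nsmul_eq_mul]
  have h2 : (Fintype.card (TreeNode τ → Bool) : ℝ) ≠ 0 := by
    rw [card_fun_tree]; positivity
  field_simp

lemma treeExp_var (τ : ℕ) (F : (TreeNode τ → Bool) → ℝ) :
    treeExp τ (fun ω => (F ω - treeExp τ F)^2)
      = treeExp τ (fun ω => F ω ^ 2) - (treeExp τ F)^2 := by
  have hN : (Fintype.card (TreeNode τ → Bool) : ℝ) ≠ 0 := by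
    rw [card_fun_tree]; positivity
  set μ := treeExp τ F with hμ
  have hsum : (∑ ω : TreeNode τ → Bool, F ω) = (Fintype.card (TreeNode τ → Bool) : ℝ) * μ := by
    rw [hμ]
    unfold treeExp
    field_simp
  unfold treeExp
  have hpt : ∀ ω : TreeNode τ → Bool, (F ω - μ)^2 = F ω^2 - 2*μ*F ω + μ^2 := fun ω => by ring
  rw [Finset.sum_congr rfl fun ω _ => hpt ω]
  rw [Finset.sum_add_distrib, Finset.sum_sub_distrib, ← Finset.mul_sum, Finset.sum_const,
    Finset.card_univ, nsmul_eq_mul, hsum]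
  field_simp
  ring

end Aux2


section Aux3
open Classical

lemma exp_numActive (τ : ℕ) : treeExp τ (numActive τ) = (τ : ℝ) := by
  have h0 : numActive τ = fun ω => ∑ v : TreeNode τ, if isLivePath ω v then (1:ℝ) else 0 := rfl
  rw [h0, treeExp_sum Finset.univ (fun v ω => if isLivePath ω v then (1:ℝ) else 0)]
  refine Eq.trans (Finset.sum_congr rfl fun v _ => exp_single v) ?_
  rw [← Finset.univ_sigma_univ, Finset.sum_sigma]
  have hd : ∀ d : Fin τ, (∑ _f : Fin (d.1+1) → Bool, ((1:ℝ)/2) ^ (d.1 + 1)) = 1 := by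
    intro d
    rw [Finset.sum_const, Finset.card_univ, Fintype.card_fun, Fintype.card_bool,
      Fintype.card_fin, nsmul_eq_mul]
    push_cast
    rw [← mul_pow]
    norm_num
  refine Eq.trans (Finset.sum_congr rfl fun d _ => hd d) ?_
  simp

lemma exp_sq (τ : ℕ) : treeExp τ (fun ω => numActive τ ω ^ 2)
    = ∑ a : Fin τ, ∑ b : Fin τ, (1 + (((min a.1 b.1 : ℕ) : ℝ) + 1)/2) := by
  have hsq : (fun ω => numActive τ ω ^ 2) = fun ω => ∑ u : TreeNode τ, ∑ v : TreeNode τ,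
      ((if isLivePath ω u then (1:ℝ) else 0) * (if isLivePath ω v then (1:ℝ) else 0)) := by
    funext ω
    rw [show numActive τ ω = ∑ v : TreeNode τ, if isLivePath ω v then (1:ℝ) else 0 from rfl,
      sq, Finset.sum_mul_sum]
  rw [hsq, treeExp_sum]
  have huv : ∀ u : TreeNode τ, treeExp τ (fun ω => ∑ v : TreeNode τ,
      ((if isLivePath ω u then (1:ℝ) else 0) * (if isLivePath ω v then (1:ℝ) else 0)))
      = ∑ v : TreeNode τ,
          (2:ℝ)^((pathFinset u ∩ pathFinset v).card) * (1/2)^(u.1.1 + v.1.1 + 2) := by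
    intro u
    rw [treeExp_sum]
    exact Finset.sum_congr rfl fun v _ => exp_joint u v
  refine Eq.trans (Finset.sum_congr rfl fun u _ => huv u) ?_
  rw [← Finset.univ_sigma_univ, Finset.sum_sigma]
  refine Finset.sum_congr rfl fun a _ => ?_
  have hinner : ∀ f : Fin (a.1+1) → Bool, (∑ v : TreeNode τ,
        (2:ℝ)^((pathFinset (⟨a, f⟩ : TreeNode τ) ∩ pathFinset v).card) * (1/2)^(a.1 + v.1.1 + 2))
      = ∑ b : Fin τ, ∑ g : Fin (b.1+1) → Bool,
          (2:ℝ)^((pathFinset (⟨a, f⟩ : TreeNode τ) ∩ pathFinset ⟨b, g⟩).card)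
            * (1/2)^(a.1 + b.1 + 2) := by
    intro f
    rw [← Finset.univ_sigma_univ, Finset.sum_sigma]
  refine Eq.trans (Finset.sum_congr rfl fun f _ => hinner f) ?_
  rw [Finset.sum_comm]
  refine Finset.sum_congr rfl fun b _ => ?_
  have hpull : (∑ f : Fin (a.1+1) → Bool, ∑ g : Fin (b.1+1) → Bool,
        (2:ℝ)^((pathFinset (⟨a, f⟩ : TreeNode τ) ∩ pathFinset ⟨b, g⟩).card)
          * (1/2)^(a.1 + b.1 + 2))
      = (∑ f : Fin (a.1+1) → Bool, ∑ g : Fin (b.1+1) → Bool,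
          (2:ℝ)^((pathFinset (⟨a, f⟩ : TreeNode τ) ∩ pathFinset ⟨b, g⟩).card))
        * (1/2)^(a.1 + b.1 + 2) := by
    rw [Finset.sum_mul]
    refine Finset.sum_congr rfl fun f _ => ?_
    rw [Finset.sum_mul]
  refine Eq.trans hpull ?_
  rw [blockSum a.2 b.2]
  have e2 : (2:ℝ)^(a.1+b.1+1) * (1/2)^(a.1+b.1+1) = 1 := by
    rw [← mul_pow]; norm_num
  have e4 : ((1:ℝ)/2)^(a.1+b.1+2) = (1/2)^(a.1+b.1+1) * (1/2) := by
    rw [show a.1+b.1+2 = (a.1+b.1+1)+1 from rfl, pow_succ]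
  have e5 : (2:ℝ)^(a.1+b.1+2) = 2^(a.1+b.1+1) * 2 := by
    rw [show a.1+b.1+2 = (a.1+b.1+1)+1 from rfl, pow_succ]
  rw [e4, e5]
  linear_combination (1 + (((min a.1 b.1 : ℕ) : ℝ) + 1)/2) * e2

lemma gaussish_real (n : ℕ) : (∑ i ∈ Finset.range n, ((i:ℝ)+1)) = n*(n+1)/2 := by
  induction n with
  | zero => simp
  | succ n ih =>
    rw [Finset.sum_range_succ, ih]
    push_cast
    ring

lemma sumsq_real (n : ℕ) :
    (∑ a ∈ Finset.range n, ∑ b ∈ Finset.range n, (((min a b : ℕ):ℝ) + 1))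
      = (n:ℝ)*(n+1)*(2*n+1)/6 := by
  induction n with
  | zero => simp
  | succ n ih =>
    have hexp : (∑ a ∈ Finset.range (n+1), ∑ b ∈ Finset.range (n+1), (((min a b : ℕ):ℝ) + 1))
        = (∑ a ∈ Finset.range n, ∑ b ∈ Finset.range n, (((min a b : ℕ):ℝ) + 1))
          + (∑ a ∈ Finset.range n, (((min a n : ℕ):ℝ) + 1))
          + ((∑ b ∈ Finset.range n, (((min n b : ℕ):ℝ) + 1)) + (((min n n : ℕ):ℝ) + 1)) := by
      rw [Finset.sum_range_succ]
      simp_rw [Finset.sum_range_succ]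
      rw [Finset.sum_add_distrib]
    have h1 : (∑ a ∈ Finset.range n, (((min a n : ℕ):ℝ) + 1))
        = ∑ a ∈ Finset.range n, ((a:ℝ)+1) := by
      refine Finset.sum_congr rfl fun x hx => ?_
      rw [Finset.mem_range] at hx
      rw [Nat.min_eq_left (le_of_lt hx)]
    have h2 : (∑ b ∈ Finset.range n, (((min n b : ℕ):ℝ) + 1))
        = ∑ b ∈ Finset.range n, ((b:ℝ)+1) := by
      refine Finset.sum_congr rfl fun x hx => ?_
      rw [Finset.mem_range] at hx
      rw [Nat.min_eq_right (le_of_lt hx)]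
    rw [hexp, h1, h2, gaussish_real, ih, Nat.min_self]
    push_cast
    ring

end Aux3

/-- **Variance lower bound for IC models.**  In the complete binary tree of depth
`τ` with each edge live independently with probability `1/2`, the number `X` of
activated non-seed nodes satisfies `E[X] = τ` and `Var[X] ≥ (1/12)·τ·(E[X])²`
(i.e. `Var[X] ≥ τ³/12`), so the linear dependence on `τ` in the variance upper
bound is necessary. -/
theorem tree_variance_lower_bound (τ : ℕ) (hτ : 1 ≤ τ) :
    treeExp τ (numActive τ) = (τ : ℝ) ∧
    (1 / 12 : ℝ) * (τ : ℝ) * (treeExp τ (numActive τ)) ^ 2 ≤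
      treeExp τ (fun ω => (numActive τ ω - treeExp τ (numActive τ)) ^ 2) := by
  have hEX := exp_numActive τ
  refine ⟨hEX, ?_⟩
  rw [treeExp_var τ (numActive τ), exp_sq τ, hEX]
  have hsplit : (∑ a : Fin τ, ∑ b : Fin τ, (1 + (((min a.1 b.1 : ℕ) : ℝ) + 1)/2))
      = (τ:ℝ)^2 + (∑ a : Fin τ, ∑ b : Fin τ, (((min a.1 b.1 : ℕ) : ℝ) + 1))/2 := by
    have h1 : ∀ a : Fin τ, (∑ b : Fin τ, (1 + (((min a.1 b.1 : ℕ) : ℝ) + 1)/2))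
        = (τ:ℝ) + (∑ b : Fin τ, (((min a.1 b.1 : ℕ) : ℝ) + 1))/2 := by
      intro a
      rw [Finset.sum_add_distrib, Finset.sum_const, Finset.card_univ, Fintype.card_fin,
        nsmul_eq_mul, mul_one, ← Finset.sum_div]
    refine Eq.trans (Finset.sum_congr rfl fun a _ => h1 a) ?_
    rw [Finset.sum_add_distrib, Finset.sum_const, Finset.card_univ, Fintype.card_fin,
      nsmul_eq_mul, ← Finset.sum_div, sq]
  have hS : (∑ a : Fin τ, ∑ b : Fin τ, (((min a.1 b.1 : ℕ) : ℝ) + 1))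
      = (τ:ℝ)*(τ+1)*(2*τ+1)/6 := by
    rw [← sumsq_real τ]
    rw [← Fin.sum_univ_eq_sum_range (fun a => ∑ b ∈ Finset.range τ, (((min a b : ℕ):ℝ) + 1)) τ]
    refine Finset.sum_congr rfl fun a _ => ?_
    rw [← Fin.sum_univ_eq_sum_range (fun b => (((min a.1 b : ℕ):ℝ) + 1)) τ]
  rw [hsplit, hS]
  have hτ0 : (0:ℝ) ≤ (τ:ℝ) := Nat.cast_nonneg τ
  nlinarith [sq_nonneg ((τ:ℝ))]
end

section
/- Let G be a stochastic diffusion model on a finite node set V with |V| = n and additive utility H(S) = Σ_{v∈S} w(v) for nonnegative node weights w, and let S ⊆ V be a seed set with unrestricted influence I(S) := I^{n−1}(S) > 0. Then for every 0 < ε < 1 and every integer τ ≥ D̄(S)/ε, the τ-step influence satisfies I^τ(S) ≥ (1 − ε)·I(S). -/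
open Finset

section Stmt11
variable {V : Type*} [Fintype V] [DecidableEq V]

/-- `firstActP p S v d` : the probability `p(S,v,d)` that node `v` is first
activated at step `d` of a diffusion from seed set `S`. -/
noncomputable def firstActP (p : ActFam V → ℝ) (S : Finset V) (v : V) : ℕ → ℝ
  | 0 => if v ∈ S then 1 else 0
  | d + 1 => ∑ φ : ActFam V,
      if v ∈ reach φ S (d + 1) ∧ v ∉ reach φ S d then p φ else 0

/-- The expected length `D̄(S)` of an activation path from `S` in unrestricted
diffusion (which stabilizes after `n − 1` steps), with additive utility given by
node weights `w`. -/
noncomputable def expPathLen (p : ActFam V → ℝ) (w : V → ℝ) (S : Finset V) : ℝ :=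
  (∑ v : V, w v * ∑ d ∈ Finset.range (Fintype.card V), (d : ℝ) * firstActP p S v d) /
    infl p (fun A => ∑ u ∈ A, w u) (Fintype.card V - 1) S

lemma reach_mono_aux (φ : ActFam V) (S : Finset V) : Monotone (reach φ S) := by
  apply monotone_nat_of_le_succ
  intro t
  exact Finset.subset_union_left

/-- Probability that `v` is active at step `t`. -/
noncomputable def actP (p : ActFam V → ℝ) (S : Finset V) (v : V) (t : ℕ) : ℝ :=
  ∑ φ : ActFam V, p φ * (if v ∈ reach φ S t then 1 else 0)

lemma infl_eq_actP (p : ActFam V → ℝ) (w : V → ℝ) (t : ℕ) (S : Finset V) :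
    infl p (fun A => ∑ u ∈ A, w u) t S = ∑ v : V, w v * actP p S v t := by
  unfold infl actP
  have h : ∀ A : Finset V, (∑ u ∈ A, w u) = ∑ v : V, (if v ∈ A then w v else 0) := by
    intro A
    rw [Finset.sum_ite_mem, Finset.univ_inter]
  simp_rw [h, Finset.mul_sum]
  rw [Finset.sum_comm]
  refine Finset.sum_congr rfl fun v _ => ?_
  refine Finset.sum_congr rfl fun φ _ => ?_
  by_cases hv : v ∈ reach φ S t <;> simp [hv, mul_comm]

lemma actP_zero (G : SDM V) (S : Finset V) (v : V) :
    actP G.p S v 0 = if v ∈ S then 1 else 0 := by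
  unfold actP
  simp only [reach]
  by_cases hv : v ∈ S <;> simp [hv, G.sum_one]

lemma firstActP_succ_eq (p : ActFam V → ℝ) (S : Finset V) (v : V) (d : ℕ) :
    firstActP p S v (d + 1) = actP p S v (d + 1) - actP p S v d := by
  unfold firstActP actP
  rw [← Finset.sum_sub_distrib]
  refine Finset.sum_congr rfl fun φ _ => ?_
  have hsub := reach_mono_aux φ S (Nat.le_succ d)
  by_cases h1 : v ∈ reach φ S d
  · have h2 : v ∈ reach φ S (d + 1) := hsub h1
    simp [h1, h2]
  · by_cases h2 : v ∈ reach φ S (d + 1) <;> simp [h1, h2]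

lemma actP_eq_sum (G : SDM V) (S : Finset V) (v : V) (t : ℕ) :
    actP G.p S v t = ∑ d ∈ Finset.range (t + 1), firstActP G.p S v d := by
  induction t with
  | zero => simp [actP_zero, firstActP]
  | succ t ih => rw [Finset.sum_range_succ, ← ih, firstActP_succ_eq]; ring

lemma firstActP_nonneg (G : SDM V) (S : Finset V) (v : V) (d : ℕ) :
    0 ≤ firstActP G.p S v d := by
  cases d with
  | zero => unfold firstActP; positivity
  | succ d =>
      unfold firstActP
      refine Finset.sum_nonneg fun φ _ => ?_
      split
      · exact G.nonneg φ
      · exact le_refl 0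

/-- **Step-limited influence approximates unrestricted influence.**  For additive
utility, if `τ ≥ D̄(S)/ε` then `I^τ(S) ≥ (1−ε)·I(S)`, where `I(S) = I^{n−1}(S)` is
the unrestricted influence. -/
theorem steplimited_vs_unrestricted
    (G : SDM V) (w : V → ℝ) (hw : ∀ v, 0 ≤ w v) (S : Finset V)
    (hpos : 0 < infl G.p (fun A => ∑ u ∈ A, w u) (Fintype.card V - 1) S)
    (ε : ℝ) (hε0 : 0 < ε) (hε1 : ε < 1)
    (τ : ℕ) (hτ : (τ : ℝ) ≥ expPathLen G.p w S / ε) :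
    (1 - ε) * infl G.p (fun A => ∑ u ∈ A, w u) (Fintype.card V - 1) S ≤
      infl G.p (fun A => ∑ u ∈ A, w u) τ S := by
  classical
  set m : ℕ := Fintype.card V - 1 with hm
  set I : ℝ := infl G.p (fun A => ∑ u ∈ A, w u) m S with hI
  set Iτ : ℝ := infl G.p (fun A => ∑ u ∈ A, w u) τ S with hIτ
  set N : ℝ := ∑ v : V, w v * ∑ d ∈ Finset.range (m + 1),
      (d : ℝ) * firstActP G.p S v d with hN
  -- the numerator of `expPathLen` equals `N`
  have hnum : (∑ v : V, w v *
      ∑ d ∈ Finset.range (Fintype.card V), (d : ℝ) * firstActP G.p S v d) = N := by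
    refine Finset.sum_congr rfl fun v _ => ?_
    congr 1
    rcases Nat.eq_zero_or_pos (Fintype.card V) with h | h
    · simp [h, hm]
    · have hcm : Fintype.card V = m + 1 := by omega
      rw [hcm]
  -- from the hypothesis on `τ` : `N ≤ ε * τ * I`
  have hNle : N ≤ ε * τ * I := by
    have h1 : expPathLen G.p w S / ε ≤ (τ : ℝ) := hτ
    have h2 : expPathLen G.p w S = N / I := by
      rw [expPathLen, hnum, hI, hm]
    rw [h2, div_le_iff₀ hε0] at h1
    have h3 : N / I ≤ τ * ε := h1
    rw [div_le_iff₀ hpos] at h3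
    nlinarith
  -- nonnegativity facts
  have hfnn : ∀ v d, 0 ≤ firstActP G.p S v d := firstActP_nonneg G S
  -- case split on whether τ exceeds m
  by_cases hτm : τ ≤ m
  · -- main case
    set t : ℕ := max τ 1 with ht
    have htpos : (0 : ℝ) < t := by
      have : 1 ≤ t := le_max_right τ 1
      exact_mod_cast Nat.lt_of_lt_of_le Nat.zero_lt_one this
    -- `I - Iτ` as a sum over `Ico (τ+1) (m+1)`
    have hdiff : I - Iτ = ∑ v : V, w v *
        ∑ d ∈ Finset.Ico (τ + 1) (m + 1), firstActP G.p S v d := by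
      rw [hI, hIτ, infl_eq_actP, infl_eq_actP, ← Finset.sum_sub_distrib]
      refine Finset.sum_congr rfl fun v _ => ?_
      rw [← mul_sub, actP_eq_sum, actP_eq_sum,
        Finset.sum_Ico_eq_sub _ (by omega : τ + 1 ≤ m + 1)]
    -- key bound : `t * (I - Iτ) ≤ N`
    have hkey : (t : ℝ) * (I - Iτ) ≤ N := by
      rw [hdiff, Finset.mul_sum]
      refine Finset.sum_le_sum fun v _ => ?_
      rw [mul_left_comm, Finset.mul_sum]
      refine mul_le_mul_of_nonneg_left ?_ (hw v)
      calc ∑ d ∈ Finset.Ico (τ + 1) (m + 1), (t : ℝ) * firstActP G.p S v d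
          ≤ ∑ d ∈ Finset.Ico (τ + 1) (m + 1), (d : ℝ) * firstActP G.p S v d := by
            refine Finset.sum_le_sum fun d hd => ?_
            have hd' : τ + 1 ≤ d := (Finset.mem_Ico.mp hd).1
            have htd : (t : ℝ) ≤ d := by
              have : t ≤ d := by omega
              exact_mod_cast this
            exact mul_le_mul_of_nonneg_right htd (hfnn v d)
        _ ≤ ∑ d ∈ Finset.range (m + 1), (d : ℝ) * firstActP G.p S v d := by
            refine Finset.sum_le_sum_of_subset_of_nonneg ?_ fun d _ _ => ?_
            · intro d hd
              rw [Finset.mem_Ico] at hd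
              rw [Finset.mem_range]
              omega
            · exact mul_nonneg (by positivity) (hfnn v d)
    -- conclude
    have hεtI : ε * τ * I ≤ ε * t * I := by
      have hτt : (τ : ℝ) ≤ t := by exact_mod_cast le_max_left τ 1
      nlinarith [mul_nonneg (mul_nonneg hε0.le (sub_nonneg.mpr hτt)) hpos.le]
    have : (t : ℝ) * (I - Iτ) ≤ (t : ℝ) * (ε * I) := by nlinarith
    have := le_of_mul_le_mul_left this htpos
    linarith
  · -- `τ > m` : influence is monotone in the step count
    have hmono : I ≤ Iτ := by
      rw [hI, hIτ, infl, infl]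
      refine Finset.sum_le_sum fun φ _ => ?_
      rcases eq_or_ne (G.p φ) 0 with h0 | h0
      · simp [h0]
      · refine mul_le_mul_of_nonneg_left ?_ (G.nonneg φ)
        refine Finset.sum_le_sum_of_subset_of_nonneg ?_ fun u _ _ => hw u
        exact reach_mono_aux φ S (by omega)
    nlinarith

end Stmt11
end

section
/- Every Independent Cascade model on a directed graph (V, 𝓔) with edge probabilities (p_e)_{e∈𝓔}, equipped with a monotone nondecreasing submodular utility H with H(∅) = 0, is a strongly submodular stochastic diffusion model: it is an independent SDM, and for every T ⊆ V and every step limit τ ≥ 0, the τ-step influence function of its reduced model with respect to T is submodular. -/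
open Finset

section IC
variable {V : Type*} [Fintype V] [DecidableEq V]

/-- The activation-function family determined by a set `E` of live edges:
`φ_v(S) = 1` iff some live edge leads from a node of `S` to `v`. -/
def icActFam (E : Finset (V × V)) : ActFam V :=
  fun v S => decide (∃ u ∈ S, (u, v) ∈ E)

/-- The probability of the live-edge set `E ⊆ 𝓔` when every edge `e ∈ 𝓔` is live
independently with probability `pe e`. -/
noncomputable def icWeight (𝓔 : Finset (V × V)) (pe : V × V → ℝ) (E : Finset (V × V)) : ℝ :=
  ∏ e ∈ 𝓔, (if e ∈ E then pe e else 1 - pe e)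

/-- The Independent Cascade model, as a distribution over activation-function
families: the pushforward of the product-Bernoulli live-edge distribution. -/
noncomputable def icP (𝓔 : Finset (V × V)) (pe : V × V → ℝ) : ActFam V → ℝ :=
  fun φ => ∑ E ∈ 𝓔.powerset, if icActFam E = φ then icWeight 𝓔 pe E else 0


/-! ### Auxiliary lemmas for the proof -/

lemma ic_dstep_union' (E : Finset (V × V)) (A B : Finset V) :
    dstep (icActFam E) (A ∪ B) = dstep (icActFam E) A ∪ dstep (icActFam E) B := by
  unfold dstep
  ext v
  simp only [Finset.mem_union, Finset.mem_filter, Finset.mem_univ, true_and, icActFam,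
    Finset.mem_erase, decide_eq_true_eq]
  constructor
  · rintro (⟨h | h⟩ | ⟨u, ⟨hne, hu | hu⟩, he⟩)
    · exact Or.inl (Or.inl h)
    · exact Or.inr (Or.inl h)
    · exact Or.inl (Or.inr ⟨u, ⟨hne, hu⟩, he⟩)
    · exact Or.inr (Or.inr ⟨u, ⟨hne, hu⟩, he⟩)
  · rintro ((h | ⟨u, ⟨hne, hu⟩, he⟩) | (h | ⟨u, ⟨hne, hu⟩, he⟩))
    · exact Or.inl (Or.inl h)
    · exact Or.inr ⟨u, ⟨hne, Or.inl hu⟩, he⟩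
    · exact Or.inl (Or.inr h)
    · exact Or.inr ⟨u, ⟨hne, Or.inr hu⟩, he⟩

lemma ic_reach_union' (E : Finset (V × V)) (A B : Finset V) (t : ℕ) :
    reach (icActFam E) (A ∪ B) t = reach (icActFam E) A t ∪ reach (icActFam E) B t := by
  induction t with
  | zero => rfl
  | succ t ih => simp only [reach, ih, ic_dstep_union']

lemma ic_reach_mono' (E : Finset (V × V)) {A B : Finset V} (h : A ⊆ B) (t : ℕ) :
    reach (icActFam E) A t ⊆ reach (icActFam E) B t := by
  have : A ∪ B = B := Finset.union_eq_right.2 h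
  rw [← this, ic_reach_union']
  exact Finset.subset_union_left

lemma sub_union_le' {H : Finset V → ℝ} (hm : MonotoneFn H) (hs : SubmodularFn H)
    (R : Finset V) : ∀ C' C : Finset V, C' ⊆ C → H (C ∪ R) - H C ≤ H (C' ∪ R) - H C' := by
  induction R using Finset.induction_on with
  | empty => intro C' C h; simp
  | @insert x R' hx ih =>
    intro C' C hCC
    have key : H (insert x (C ∪ R')) - H (C ∪ R') ≤ H (insert x (C' ∪ R')) - H (C' ∪ R') := by
      by_cases hxB : x ∈ C ∪ R'
      · rw [Finset.insert_eq_self.2 hxB]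
        have := hm (C' ∪ R') (insert x (C' ∪ R')) (Finset.subset_insert _ _)
        linarith
      · exact hs (C' ∪ R') (C ∪ R') (Finset.union_subset_union hCC (subset_refl _)) x hxB
    have h2 := ih C' C hCC
    rw [Finset.union_insert, Finset.union_insert]
    linarith

lemma sum_powerset_weight' (s : Finset (V × V)) (pe : V × V → ℝ) :
    ∑ F ∈ s.powerset, ∏ e ∈ s, (if e ∈ F then pe e else 1 - pe e) = 1 := by
  have h2 : ∀ F ∈ s.powerset,
      (∏ e ∈ s, if e ∈ F then pe e else 1 - pe e)
        = (∏ i ∈ F, pe i) * ∏ i ∈ s \ F, (1 - pe i) := by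
    intro F hF
    rw [Finset.mem_powerset] at hF
    conv_lhs => rw [← Finset.union_sdiff_of_subset hF]
    rw [Finset.prod_union Finset.disjoint_sdiff]
    congr 1
    · exact Finset.prod_congr rfl fun e he => if_pos he
    · exact Finset.prod_congr rfl fun e he => if_neg (Finset.mem_sdiff.1 he).2
  rw [Finset.sum_congr rfl h2, ← Finset.prod_add]
  simp

lemma icActFam_filter' (E : Finset (V × V)) (v : V) :
    icActFam (E.filter (fun e => e.2 = v)) v = icActFam E v := by
  funext S
  simp only [icActFam, Finset.mem_filter, decide_eq_decide]
  constructor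
  · rintro ⟨u, hu, he, _⟩; exact ⟨u, hu, he⟩
  · rintro ⟨u, hu, he⟩; exact ⟨u, hu, he, trivial⟩

lemma ic_indep' (𝓔 : Finset (V × V)) (pe : V × V → ℝ)
    (hpe : ∀ e ∈ 𝓔, 0 ≤ pe e ∧ pe e ≤ 1) : IndepP (icP 𝓔 pe) := by
  classical
  set s : V → Finset (V × V) := fun v => 𝓔.filter (fun e => e.2 = v) with hs
  set w : V → Finset (V × V) → ℝ :=
    fun v F => ∏ e ∈ s v, (if e ∈ F then pe e else 1 - pe e) with hw
  refine ⟨fun v g => ∑ F ∈ (s v).powerset, if icActFam F v = g then w v F else 0, ?_, ?_, ?_⟩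
  · intro v g
    refine Finset.sum_nonneg fun F hF => ?_
    split
    · refine Finset.prod_nonneg fun e he => ?_
      have he𝓔 : e ∈ 𝓔 := (Finset.mem_filter.1 he).1
      split
      · exact (hpe e he𝓔).1
      · linarith [(hpe e he𝓔).2]
    · exact le_rfl
  · intro v
    rw [Finset.sum_comm, ← sum_powerset_weight' (s v) pe]
    refine Finset.sum_congr rfl fun F hF => ?_
    rw [Finset.sum_ite_eq (Finset.univ) (icActFam F v) (fun _ => w v F)]
    simp [hw]
  · intro φ
    rw [Finset.prod_univ_sum]
    unfold icP
    symm
    refine Finset.sum_bij' (fun x _ => Finset.univ.biUnion x)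
      (fun E _ => fun v => E.filter (fun e => e.2 = v)) ?_ ?_ ?_ ?_ ?_
    · intro x hx
      rw [Finset.mem_powerset]
      intro e he
      rw [Finset.mem_biUnion] at he
      obtain ⟨v, _, hev⟩ := he
      have := Fintype.mem_piFinset.1 hx v
      rw [Finset.mem_powerset] at this
      exact (Finset.mem_filter.1 (this hev)).1
    · intro E hE
      rw [Fintype.mem_piFinset]
      intro v
      rw [Finset.mem_powerset]
      intro e he
      rw [Finset.mem_filter] at he ⊢
      exact ⟨Finset.mem_powerset.1 hE he.1, he.2⟩
    · intro x hx
      have hxs : ∀ v, x v ⊆ s v := fun v =>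
        Finset.mem_powerset.1 (Fintype.mem_piFinset.1 hx v)
      funext v
      ext e
      simp only [Finset.mem_filter, Finset.mem_biUnion, Finset.mem_univ, true_and]
      constructor
      · rintro ⟨⟨u, heu⟩, hev⟩
        have h2 := Finset.mem_filter.1 (hxs u heu)
        have huv : u = v := by rw [← h2.2]; exact hev
        rwa [huv] at heu
      · intro he
        exact ⟨⟨v, he⟩, (Finset.mem_filter.1 (hxs v he)).2⟩
    · intro E hE
      ext e
      simp only [Finset.mem_biUnion, Finset.mem_univ, true_and, Finset.mem_filter]
      exact ⟨fun ⟨v, he, _⟩ => he, fun he => ⟨e.2, he, rfl⟩⟩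
    · intro x hx
      have hxs : ∀ v, x v ⊆ s v := fun v =>
        Finset.mem_powerset.1 (Fintype.mem_piFinset.1 hx v)
      have hfib : ∀ v, (Finset.univ.biUnion x).filter (fun e => e.2 = v) = x v := by
        intro v
        ext e
        simp only [Finset.mem_filter, Finset.mem_biUnion, Finset.mem_univ, true_and]
        constructor
        · rintro ⟨⟨u, heu⟩, hev⟩
          have h2 := Finset.mem_filter.1 (hxs u heu)
          have huv : u = v := by rw [← h2.2]; exact hev
          rwa [huv] at heu
        · intro he
          exact ⟨⟨v, he⟩, (Finset.mem_filter.1 (hxs v he)).2⟩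
      have hact : ∀ v, icActFam (x v) v = icActFam (Finset.univ.biUnion x) v := by
        intro v; rw [← hfib v, icActFam_filter']
      by_cases hmatch : icActFam (Finset.univ.biUnion x) = φ
      · rw [if_pos hmatch]
        have hcond : ∀ v, (if icActFam (x v) v = φ v then w v (x v) else 0) = w v (x v) := by
          intro v; rw [if_pos (by rw [hact v, hmatch])]
        rw [Finset.prod_congr rfl (fun v _ => hcond v)]
        unfold icWeight
        rw [← Finset.prod_fiberwise_of_maps_to (fun e (_ : e ∈ 𝓔) => Finset.mem_univ e.2)
             (fun e => if e ∈ Finset.univ.biUnion x then pe e else 1 - pe e)]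
        refine Finset.prod_congr rfl fun v _ => ?_
        refine Finset.prod_congr rfl fun e he => ?_
        have hev : e.2 = v := (Finset.mem_filter.1 he).2
        have hiff : (e ∈ Finset.univ.biUnion x) ↔ e ∈ x v := by
          rw [← hfib v, Finset.mem_filter]
          exact ⟨fun h => ⟨h, hev⟩, fun h => h.1⟩
        exact if_congr hiff.symm rfl rfl
      · rw [if_neg hmatch]
        obtain ⟨v, hv⟩ : ∃ v, icActFam (Finset.univ.biUnion x) v ≠ φ v := by
          by_contra h
          push_neg at h
          exact hmatch (funext h)
        refine Finset.prod_eq_zero (Finset.mem_univ v) ?_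
        rw [if_neg (by rw [hact v]; exact hv)]

lemma icP_nonneg' (𝓔 : Finset (V × V)) (pe : V × V → ℝ)
    (hpe : ∀ e ∈ 𝓔, 0 ≤ pe e ∧ pe e ≤ 1) (φ : ActFam V) : 0 ≤ icP 𝓔 pe φ := by
  refine Finset.sum_nonneg fun E hE => ?_
  split
  · refine Finset.prod_nonneg fun e he => ?_
    split
    · exact (hpe e he).1
    · linarith [(hpe e he).2]
  · exact le_rfl

lemma icP_support' (𝓔 : Finset (V × V)) (pe : V × V → ℝ) {φ : ActFam V}
    (h : icP 𝓔 pe φ ≠ 0) : ∃ E : Finset (V × V), icActFam E = φ := by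
  by_contra hc
  push_neg at hc
  exact h (Finset.sum_eq_zero fun E _ => if_neg (hc E))

lemma ic_marg' (E : Finset (V × V)) {H : Finset V → ℝ} (hm : MonotoneFn H)
    (hs : SubmodularFn H) (T : Finset V) (τ : ℕ) {A B : Finset V} (hAB : A ⊆ B) (x : V) :
    H (reach (icActFam E) (insert x B ∪ T) τ) - H (reach (icActFam E) (B ∪ T) τ) ≤
    H (reach (icActFam E) (insert x A ∪ T) τ) - H (reach (icActFam E) (A ∪ T) τ) := by
  have key : ∀ S : Finset V, insert x S ∪ T = (S ∪ T) ∪ {x} := by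
    intro S
    rw [Finset.insert_union, Finset.insert_eq, Finset.union_comm {x} (S ∪ T)]
  have h1 : reach (icActFam E) ((B ∪ T) ∪ {x}) τ
      = reach (icActFam E) (B ∪ T) τ ∪ reach (icActFam E) {x} τ := ic_reach_union' E _ _ τ
  have h2 : reach (icActFam E) ((A ∪ T) ∪ {x}) τ
      = reach (icActFam E) (A ∪ T) τ ∪ reach (icActFam E) {x} τ := ic_reach_union' E _ _ τ
  rw [key A, key B, h1, h2]
  exact sub_union_le' hm hs _ _ _ (ic_reach_mono' E (Finset.union_subset_union hAB le_rfl) τ)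

lemma ic_reduced_submod' (𝓔 : Finset (V × V)) (pe : V × V → ℝ)
    (hpe : ∀ e ∈ 𝓔, 0 ≤ pe e ∧ pe e ≤ 1)
    {H : Finset V → ℝ} (hm : MonotoneFn H) (hs : SubmodularFn H)
    (T : Finset V) (τ : ℕ) : SubmodularOn Tᶜ (reducedInfl (icP 𝓔 pe) H T τ) := by
  intro A B hAB _ x _ _
  set ind : ActFam V → ℝ :=
    Set.indicator {ψ : ActFam V | ∀ v ∉ T, ψ v (T.erase v) = false} (icP 𝓔 pe) with hind
  have hind_nn : ∀ φ, 0 ≤ ind φ :=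
    fun φ => Set.indicator_apply_nonneg fun _ => icP_nonneg' 𝓔 pe hpe φ
  set N : Finset V → ℝ := fun S => ∑ φ : ActFam V, ind φ * (H (reach φ (S ∪ T) τ) - H T)
    with hN
  set D : ℝ := ∑ φ : ActFam V, ind φ with hD
  have hrd : ∀ S, reducedInfl (icP 𝓔 pe) H T τ S = N S / D := fun S => rfl
  have hDnn : 0 ≤ D := Finset.sum_nonneg fun φ _ => hind_nn φ
  have core : N (insert x B) - N B ≤ N (insert x A) - N A := by
    rw [hN]
    simp only [← Finset.sum_sub_distrib]
    refine Finset.sum_le_sum fun φ _ => ?_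
    by_cases h0 : ind φ = 0
    · simp [h0]
    · have hicp : icP 𝓔 pe φ ≠ 0 := by
        intro hc
        exact h0 (by rw [hind]; unfold Set.indicator; split <;> simp [hc])
      obtain ⟨E, rfl⟩ := icP_support' 𝓔 pe hicp
      have := ic_marg' E hm hs T τ hAB x
      have hnn := hind_nn (icActFam E)
      nlinarith
  rw [hrd, hrd, hrd, hrd, div_sub_div_same, div_sub_div_same, div_eq_mul_inv,
    div_eq_mul_inv]
  exact mul_le_mul_of_nonneg_right core (inv_nonneg.2 hDnn)


/-- **IC models are strongly submodular.**  Every Independent Cascade model with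
monotone submodular utility `H` (`H(∅)=0`) is an independent SDM whose reduced
influence functions (for every `T ⊆ V` and every step limit) are submodular. -/
theorem ic_strongly_submodular
    (𝓔 : Finset (V × V)) (pe : V × V → ℝ)
    (hpe : ∀ e ∈ 𝓔, 0 ≤ pe e ∧ pe e ≤ 1)
    (H : Finset V → ℝ) (hH0 : H ∅ = 0) (hHnn : ∀ S, 0 ≤ H S)
    (hHmono : MonotoneFn H) (hHsub : SubmodularFn H) :
    StronglySubmodular (icP 𝓔 pe) H :=
  ⟨ic_indep' 𝓔 pe hpe, hHsub, fun T τ => ic_reduced_submod' 𝓔 pe hpe hHmono hHsub T τ⟩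

end IC
end
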